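/- arXiv:1906.12235 — 4 statements merged into one kernel-verified Lean document; each statement's English description precedes it below -/
import Mathlib

section
/- Let G be an (n−k)-regular bipartite false twin-free graph on 2n vertices with bipartition A ∪ B and γ_t(G) = γ_gr^t(G) = 6, let a_1 ≠ a_2 be vertices of A, and set B_2 = N(a_1)\N(a_2), B_1 = N(a_2)\N(a_1), B' = N(a_1) ∩ N(a_2), and A' = {a ∈ A\{a_1,a_2} : N(a) ⊆ B_1 ∪ B_2 ∪ B'}. Then for every x ∈ A', B_1 ∪ B_2 ⊆ N(x) and x has exactly k − 1 non-neighbors in B'. -/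
set_option linter.unusedSectionVars false
set_option linter.unusedVariables false
set_option maxHeartbeats 1000000


/-- `S` is a total dominating set of `G`: every vertex has a neighbor in `S`. -/
def IsTotalDomSet {V : Type*} (G : SimpleGraph V) (S : Set V) : Prop :=
  ∀ v : V, ∃ u ∈ S, G.Adj v u

/-- `l` is a legal sequence of `G`: the vertices are distinct and every vertex
(except possibly the first) totally dominates a vertex not totally dominated
by the previous vertices. -/
def IsLegalSeq {V : Type*} (G : SimpleGraph V) (l : List V) : Prop :=
  l.Nodup ∧ ∀ i : Fin l.length, 0 < (i : ℕ) →
    ∃ w : V, G.Adj (l.get i) w ∧ ∀ j : Fin l.length, (j : ℕ) < (i : ℕ) → ¬ G.Adj (l.get j) w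

/-- `l` is a total dominating sequence of `G`. -/
def IsTotalDomSeq {V : Type*} (G : SimpleGraph V) (l : List V) : Prop :=
  IsLegalSeq G l ∧ IsTotalDomSet G {v | v ∈ l}

/-- The Grundy total domination number of `G`: the maximum length of a total
dominating sequence. -/
noncomputable def grundyTotalDomNum {V : Type*} (G : SimpleGraph V) : ℕ :=
  sSup {k : ℕ | ∃ l : List V, IsTotalDomSeq G l ∧ l.length = k}

/-- The total domination number of `G`: the minimum cardinality of a total
dominating set. -/
noncomputable def totalDomNum {V : Type*} (G : SimpleGraph V) : ℕ :=
  sInf {k : ℕ | ∃ S : Set V, IsTotalDomSet G S ∧ S.ncard = k}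

/-- `A`, `B` is a bipartition of `G`. -/
def IsBipartitionOf {V : Type*} (G : SimpleGraph V) (A B : Set V) : Prop :=
  (∀ v : V, (v ∈ A ∧ v ∉ B) ∨ (v ∈ B ∧ v ∉ A)) ∧
  ∀ ⦃u v : V⦄, G.Adj u v → (u ∈ A ∧ v ∈ B) ∨ (u ∈ B ∧ v ∈ A)

/-- `G` has no false twins: distinct vertices have distinct open neighborhoods. -/
def FalseTwinFree {V : Type*} (G : SimpleGraph V) : Prop :=
  ∀ u v : V, u ≠ v → G.neighborSet u ≠ G.neighborSet v

/-- `G` has no isolated vertices. -/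
def NoIsolatedVerts {V : Type*} (G : SimpleGraph V) : Prop :=
  ∀ v : V, ∃ u : V, G.Adj v u

section Infra

variable {V : Type*} [Fintype V] {G : SimpleGraph V}

lemma legal_append_one {l : List V} {w v : V} (hl : IsLegalSeq G l)
    (hwv : G.Adj w v) (hv : ∀ u ∈ l, ¬ G.Adj u v) : IsLegalSeq G (l ++ [w]) := by
  obtain ⟨hnd, hleg⟩ := hl
  have hwl : w ∉ l := fun h => hv w h hwv
  constructor
  · simp [List.nodup_append, hnd, hwl]
    rintro a ha rfl; exact hwl ha
  · intro i hi
    have hil : (i : ℕ) < l.length + 1 := by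
      have := i.2; simpa using this
    rcases lt_or_ge (i : ℕ) l.length with hc | hc
    · obtain ⟨w', hw1, hw2⟩ := hleg ⟨i, hc⟩ hi
      refine ⟨w', ?_, ?_⟩
      · have hg : (l ++ [w]).get i = l.get ⟨i, hc⟩ := by
          simp [List.get_eq_getElem, List.getElem_append_left hc]
        rwa [hg]
      · intro j hj
        have hjl : (j : ℕ) < l.length := lt_trans hj hc
        have hg : (l ++ [w]).get j = l.get ⟨j, hjl⟩ := by
          simp [List.get_eq_getElem, List.getElem_append_left hjl]
        rw [hg]; exact hw2 ⟨j, hjl⟩ hj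
    · have hieq : (i : ℕ) = l.length := by omega
      refine ⟨v, ?_, ?_⟩
      · have hg : (l ++ [w]).get i = w := by
          simp [List.get_eq_getElem, List.getElem_append_right, hieq]
        rwa [hg]
      · intro j hj
        have hjl : (j : ℕ) < l.length := by omega
        have hg : (l ++ [w]).get j = l.get ⟨j, hjl⟩ := by
          simp [List.get_eq_getElem, List.getElem_append_left hjl]
        rw [hg]
        exact hv _ (List.get_mem l _)

lemma legal_step (hdeg : ∀ v : V, ∃ u : V, G.Adj v u) {l : List V} (hl : IsLegalSeq G l)
    (h : ¬ IsTotalDomSet G {v | v ∈ l}) :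
    ∃ w, w ∉ l ∧ IsLegalSeq G (l ++ [w]) := by
  rw [IsTotalDomSet] at h; push_neg at h
  obtain ⟨v, hv⟩ := h
  obtain ⟨w, hw⟩ := hdeg v
  have hv' : ∀ u ∈ l, ¬ G.Adj u v := fun u hu hadj => hv u hu hadj.symm
  exact ⟨w, fun hwl => hv' w hwl hw.symm, legal_append_one hl hw.symm hv'⟩

lemma exists_tds (hdeg : ∀ v : V, ∃ u : V, G.Adj v u) :
    ∀ (m : ℕ) (l : List V), IsLegalSeq G l → Fintype.card V ≤ l.length + m →
      ∃ l', IsTotalDomSeq G l' ∧ l.length ≤ l'.length := by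
  intro m
  induction m with
  | zero =>
    intro l hl hm
    by_cases hdom : IsTotalDomSet G {v | v ∈ l}
    · exact ⟨l, ⟨hl, hdom⟩, le_rfl⟩
    · obtain ⟨w, hwl, hl'⟩ := legal_step hdeg hl hdom
      have h1 := hl'.1.length_le_card
      simp at h1
      omega
  | succ m ih =>
    intro l hl hm
    by_cases hdom : IsTotalDomSet G {v | v ∈ l}
    · exact ⟨l, ⟨hl, hdom⟩, le_rfl⟩
    · obtain ⟨w, hwl, hl'⟩ := legal_step hdeg hl hdom
      obtain ⟨l', h1, h2⟩ := ih (l ++ [w]) hl' (by simp; omega)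
      refine ⟨l', h1, ?_⟩
      simp at h2; omega

lemma legal_length_le (hdeg : ∀ v : V, ∃ u : V, G.Adj v u)
    (hg : grundyTotalDomNum G = 6) {l : List V} (hl : IsLegalSeq G l) :
    l.length ≤ 6 := by
  obtain ⟨l', h1, h2⟩ := exists_tds hdeg (Fintype.card V) l hl (by omega)
  have hb : BddAbove {k : ℕ | ∃ l : List V, IsTotalDomSeq G l ∧ l.length = k} := by
    refine ⟨Fintype.card V, ?_⟩
    rintro c ⟨l'', h'', rfl⟩
    exact h''.1.1.length_le_card
  have h3 : l'.length ≤ 6 := by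
    rw [← hg, grundyTotalDomNum]
    exact le_csSup hb ⟨l', h1, rfl⟩
  omega

end Infra


section L7
variable {V : Type*} {G : SimpleGraph V}

lemma legal7 {v1 v2 v3 v4 v5 v6 v7 : V}
    (hnd : ([v1, v2, v3, v4, v5, v6, v7] : List V).Nodup)
    {w2 w3 w4 w5 w6 w7 : V}
    (a2 : G.Adj v2 w2) (n21 : ¬ G.Adj v1 w2)
    (a3 : G.Adj v3 w3) (n31 : ¬ G.Adj v1 w3) (n32 : ¬ G.Adj v2 w3)
    (a4 : G.Adj v4 w4) (n41 : ¬ G.Adj v1 w4) (n42 : ¬ G.Adj v2 w4) (n43 : ¬ G.Adj v3 w4)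
    (a5 : G.Adj v5 w5) (n51 : ¬ G.Adj v1 w5) (n52 : ¬ G.Adj v2 w5) (n53 : ¬ G.Adj v3 w5)
      (n54 : ¬ G.Adj v4 w5)
    (a6 : G.Adj v6 w6) (n61 : ¬ G.Adj v1 w6) (n62 : ¬ G.Adj v2 w6) (n63 : ¬ G.Adj v3 w6)
      (n64 : ¬ G.Adj v4 w6) (n65 : ¬ G.Adj v5 w6)
    (a7 : G.Adj v7 w7) (n71 : ¬ G.Adj v1 w7) (n72 : ¬ G.Adj v2 w7) (n73 : ¬ G.Adj v3 w7)
      (n74 : ¬ G.Adj v4 w7) (n75 : ¬ G.Adj v5 w7) (n76 : ¬ G.Adj v6 w7) :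
    IsLegalSeq G [v1, v2, v3, v4, v5, v6, v7] := by
  refine ⟨hnd, ?_⟩
  intro i hi
  obtain ⟨iv, hiv⟩ := i
  simp only [List.length_cons, List.length_nil] at hiv
  simp only [Fin.val_mk] at hi ⊢
  have key : ∀ (jv : ℕ) (hjv : jv < ([v1, v2, v3, v4, v5, v6, v7] : List V).length) (w : V),
      ¬ G.Adj v1 w → ¬ G.Adj v2 w → ¬ G.Adj v3 w → ¬ G.Adj v4 w → ¬ G.Adj v5 w →
      ¬ G.Adj v6 w → ¬ G.Adj v7 w →
      ¬ G.Adj (([v1, v2, v3, v4, v5, v6, v7] : List V).get ⟨jv, hjv⟩) w := by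
    intro jv hjv w h1 h2 h3 h4 h5 h6 h7
    simp only [List.length_cons, List.length_nil] at hjv
    interval_cases jv <;> assumption
  interval_cases iv
  · exact ⟨w2, a2, by
      rintro ⟨jv, hjv⟩ hj
      simp only [Fin.val_mk] at hj
      interval_cases jv
      · exact n21⟩
  · exact ⟨w3, a3, by
      rintro ⟨jv, hjv⟩ hj
      simp only [Fin.val_mk] at hj
      interval_cases jv
      · exact n31
      · exact n32⟩
  · exact ⟨w4, a4, by
      rintro ⟨jv, hjv⟩ hj
      simp only [Fin.val_mk] at hj
      interval_cases jv
      · exact n41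
      · exact n42
      · exact n43⟩
  · exact ⟨w5, a5, by
      rintro ⟨jv, hjv⟩ hj
      simp only [Fin.val_mk] at hj
      interval_cases jv
      · exact n51
      · exact n52
      · exact n53
      · exact n54⟩
  · exact ⟨w6, a6, by
      rintro ⟨jv, hjv⟩ hj
      simp only [Fin.val_mk] at hj
      interval_cases jv
      · exact n61
      · exact n62
      · exact n63
      · exact n64
      · exact n65⟩
  · exact ⟨w7, a7, by
      rintro ⟨jv, hjv⟩ hj
      simp only [Fin.val_mk] at hj
      interval_cases jv
      · exact n71
      · exact n72
      · exact n73
      · exact n74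
      · exact n75
      · exact n76⟩

end L7
/-- All the structural facts we need about the graph, symmetric in the two sides. -/
structure Setup {V : Type*} [Fintype V] (G : SimpleGraph V) (n k : ℕ) (A B : Set V) : Prop where
  hadj : ∀ ⦃u v : V⦄, G.Adj u v → (u ∈ A ∧ v ∈ B) ∨ (u ∈ B ∧ v ∈ A)
  hdisj : ∀ v : V, ¬ (v ∈ A ∧ v ∈ B)
  hdeg : ∀ v : V, ∃ u : V, G.Adj v u
  hftf : FalseTwinFree G
  hreg : ∀ v : V, (G.neighborSet v).ncard = n - k
  hcardA : A.ncard = n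
  hcardB : B.ncard = n
  hk2 : 2 ≤ k
  hkn : k < n
  hle6 : ∀ l : List V, IsLegalSeq G l → l.length ≤ 6
  h6le : ∀ S : Set V, IsTotalDomSet G S → 6 ≤ S.ncard

namespace Setup

variable {V : Type*} [Fintype V] {G : SimpleGraph V} {n k : ℕ} {A B : Set V}

lemma symm (st : Setup G n k A B) : Setup G n k B A where
  hadj := fun u v h => (st.hadj h).symm
  hdisj := fun v h => st.hdisj v ⟨h.2, h.1⟩
  hdeg := st.hdeg
  hftf := st.hftf
  hreg := st.hreg
  hcardA := st.hcardB
  hcardB := st.hcardA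
  hk2 := st.hk2
  hkn := st.hkn
  hle6 := st.hle6
  h6le := st.h6le

lemma hNA (st : Setup G n k A B) : ∀ a ∈ A, G.neighborSet a ⊆ B := by
  intro a ha b hb
  rcases st.hadj hb with ⟨_, h⟩ | ⟨h, _⟩
  · exact h
  · exact absurd ⟨ha, h⟩ (st.hdisj a)

lemma memA_of_adj (st : Setup G n k A B) {b p : V} (hb : b ∈ B) (h : G.Adj b p) : p ∈ A := by
  rcases st.hadj h with ⟨h1, _⟩ | ⟨_, h2⟩
  · exact absurd ⟨h1, hb⟩ (st.hdisj b)
  · exact h2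

lemma not_adj_of_memA (st : Setup G n k A B) {p q : V} (hp : p ∈ A) (hq : q ∈ A) :
    ¬ G.Adj p q := by
  intro h
  rcases st.hadj h with ⟨_, h2⟩ | ⟨h2, _⟩
  · exact st.hdisj q ⟨hq, h2⟩
  · exact st.hdisj p ⟨hp, h2⟩

lemma ne_of_sides (st : Setup G n k A B) {p q : V} (hp : p ∈ A) (hq : q ∈ B) : p ≠ q :=
  fun h => st.hdisj p ⟨hp, h ▸ hq⟩

lemma hcover (st : Setup G n k A B) : ∀ v : V, v ∈ A ∨ v ∈ B := by
  intro v
  by_contra hc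
  push_neg at hc
  obtain ⟨w, hw⟩ := st.hdeg v
  rcases st.hadj hw with ⟨hv', _⟩ | ⟨hv', _⟩
  · exact hc.1 hv'
  · exact hc.2 hv'

lemma hM (st : Setup G n k A B) : ∀ a ∈ A, (B \ G.neighborSet a).ncard = k := by
  intro a ha
  rw [Set.ncard_diff (st.hNA a ha), st.hcardB, st.hreg a]
  have := st.hkn
  omega

lemma diffne (st : Setup G n k A B) (u v : V) (h : u ≠ v) :
    (G.neighborSet v \ G.neighborSet u).Nonempty := by
  rw [Set.nonempty_iff_ne_empty]
  intro h0
  rw [Set.diff_eq_empty] at h0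
  have heq := Set.eq_of_subset_of_ncard_le h0 (by rw [st.hreg u, st.hreg v])
  exact st.hftf u v h heq.symm

/-- There are two distinct vertices of `B` with a common non-neighbor in `A`. -/
lemma pair (st : Setup G n k A B) : ∃ b₁ b₂ : V, b₁ ∈ B ∧ b₂ ∈ B ∧ b₁ ≠ b₂ ∧
    (A \ (G.neighborSet b₁ ∪ G.neighborSet b₂)).Nonempty := by
  classical
  by_contra h
  push_neg at h
  have hdisjM : ∀ b₁ ∈ B, ∀ b₂ ∈ B, b₁ ≠ b₂ →
      Disjoint (A \ G.neighborSet b₁) (A \ G.neighborSet b₂) := by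
    intro b₁ hb₁ b₂ hb₂ hne
    rw [Set.disjoint_left]
    rintro t ⟨htA, ht1⟩ ⟨_, ht2⟩
    have hempty := h b₁ b₂ hb₁ hb₂ hne
    exact (Set.eq_empty_iff_forall_notMem.1 hempty t) ⟨htA, fun hc => hc.elim ht1 ht2⟩
  set BF := B.toFinite.toFinset with hBF
  set AF := A.toFinite.toFinset with hAF
  have hBFcard : BF.card = n := by
    rw [hBF, ← Set.ncard_eq_toFinset_card B B.toFinite, st.hcardB]
  have hAFcard : AF.card = n := by
    rw [hAF, ← Set.ncard_eq_toFinset_card A A.toFinite, st.hcardA]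
  set f : V → Finset V := fun b => (A \ G.neighborSet b).toFinite.toFinset with hf
  have hfcard : ∀ b ∈ BF, (f b).card = k := by
    intro b hb
    rw [hf, ← Set.ncard_eq_toFinset_card _ _]
    exact st.symm.hM b (by rwa [hBF, Set.Finite.mem_toFinset] at hb)
  have hdisjF : ∀ b₁ ∈ BF, ∀ b₂ ∈ BF, b₁ ≠ b₂ → Disjoint (f b₁) (f b₂) := by
    intro b₁ hb₁ b₂ hb₂ hne
    rw [hBF, Set.Finite.mem_toFinset] at hb₁ hb₂
    have := hdisjM b₁ hb₁ b₂ hb₂ hne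
    rw [Finset.disjoint_left]
    intro t ht1 ht2
    rw [hf, Set.Finite.mem_toFinset] at ht1 ht2
    exact Set.disjoint_left.1 this ht1 ht2
  have hsub : BF.biUnion f ⊆ AF := by
    intro t ht
    rw [Finset.mem_biUnion] at ht
    obtain ⟨b, _, htb⟩ := ht
    rw [hf, Set.Finite.mem_toFinset] at htb
    rw [hAF, Set.Finite.mem_toFinset]
    exact htb.1
  have hcount : (BF.biUnion f).card = ∑ b ∈ BF, (f b).card := Finset.card_biUnion hdisjF
  have hsum : ∑ b ∈ BF, (f b).card = n * k := by
    rw [Finset.sum_congr rfl hfcard, Finset.sum_const, hBFcard, smul_eq_mul]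
  have hle : n * k ≤ n := by
    rw [← hsum, ← hcount, ← hAFcard]
    exact Finset.card_le_card hsub
  have h2 : n * 2 ≤ n * k := Nat.mul_le_mul_left n st.hk2
  have hn1 : 1 ≤ n := by have := st.hkn; omega
  omega

/-- A legal sequence of length 3 inside `B`. -/
lemma triple (st : Setup G n k A B) : ∃ b₁ b₂ b₃ u₂ u₃ : V,
    b₁ ∈ B ∧ b₂ ∈ B ∧ b₃ ∈ B ∧ b₁ ≠ b₂ ∧ b₁ ≠ b₃ ∧ b₂ ≠ b₃ ∧
    G.Adj b₂ u₂ ∧ ¬ G.Adj b₁ u₂ ∧ G.Adj b₃ u₃ ∧ ¬ G.Adj b₁ u₃ ∧ ¬ G.Adj b₂ u₃ := by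
  obtain ⟨b₁, b₂, hb₁, hb₂, hne, t, htA, htN⟩ := st.pair
  obtain ⟨u₂, hu₂2, hu₂1⟩ := st.diffne b₁ b₂ hne
  obtain ⟨b₃, hb₃⟩ := st.hdeg t
  have ht1 : ¬ G.Adj b₁ t := fun h => htN (Or.inl h)
  have ht2 : ¬ G.Adj b₂ t := fun h => htN (Or.inr h)
  have hb₃B : b₃ ∈ B := by
    rcases st.hadj hb₃ with ⟨h1, h2⟩ | ⟨h1, h2⟩
    · exact h2
    · exact absurd ⟨htA, h1⟩ (st.hdisj t)
  refine ⟨b₁, b₂, b₃, u₂, t, hb₁, hb₂, hb₃B, hne, ?_, ?_, hu₂2, hu₂1, hb₃.symm, ht1, ht2⟩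
  · rintro rfl; exact ht1 hb₃.symm
  · rintro rfl; exact ht2 hb₃.symm

/-- Four vertices of `A` forming a legal sequence give a contradiction. -/
lemma seven (st : Setup G n k A B) (a1 a2 a3 a4 : V)
    (h1A : a1 ∈ A) (h2A : a2 ∈ A) (h3A : a3 ∈ A) (h4A : a4 ∈ A)
    (h12 : a1 ≠ a2) (h13 : a1 ≠ a3) (h14 : a1 ≠ a4)
    (h23 : a2 ≠ a3) (h24 : a2 ≠ a4) (h34 : a3 ≠ a4)
    {w2 w3 w4 : V}
    (hw2 : G.Adj a2 w2) (hw21 : ¬ G.Adj a1 w2)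
    (hw3 : G.Adj a3 w3) (hw31 : ¬ G.Adj a1 w3) (hw32 : ¬ G.Adj a2 w3)
    (hw4 : G.Adj a4 w4) (hw41 : ¬ G.Adj a1 w4) (hw42 : ¬ G.Adj a2 w4) (hw43 : ¬ G.Adj a3 w4) :
    False := by
  obtain ⟨b1, b2, b3, u2, u3, hb1B, hb2B, hb3B, hb12, hb13, hb23,
    hu2, hu21, hu3, hu31, hu32⟩ := st.triple
  obtain ⟨u1, hu1⟩ := st.hdeg b1
  have hu1A : u1 ∈ A := st.memA_of_adj hb1B hu1
  have hu2A : u2 ∈ A := st.memA_of_adj hb2B hu2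
  have hu3A : u3 ∈ A := st.memA_of_adj hb3B hu3
  have hnd : ([a1, a2, a3, a4, b1, b2, b3] : List V).Nodup := by
    simp only [List.nodup_cons, List.mem_cons, List.not_mem_nil, or_false, not_or,
      List.nodup_nil, and_true]
    exact ⟨⟨h12, h13, h14, st.ne_of_sides h1A hb1B, st.ne_of_sides h1A hb2B,
        st.ne_of_sides h1A hb3B⟩,
      ⟨h23, h24, st.ne_of_sides h2A hb1B, st.ne_of_sides h2A hb2B, st.ne_of_sides h2A hb3B⟩,
      ⟨h34, st.ne_of_sides h3A hb1B, st.ne_of_sides h3A hb2B, st.ne_of_sides h3A hb3B⟩,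
      ⟨st.ne_of_sides h4A hb1B, st.ne_of_sides h4A hb2B, st.ne_of_sides h4A hb3B⟩,
      ⟨hb12, hb13⟩, ⟨hb23, not_false⟩⟩
  have hleg := legal7 hnd hw2 hw21 hw3 hw31 hw32 hw4 hw41 hw42 hw43
    hu1 (st.not_adj_of_memA h1A hu1A) (st.not_adj_of_memA h2A hu1A)
      (st.not_adj_of_memA h3A hu1A) (st.not_adj_of_memA h4A hu1A)
    hu2 (st.not_adj_of_memA h1A hu2A) (st.not_adj_of_memA h2A hu2A)
      (st.not_adj_of_memA h3A hu2A) (st.not_adj_of_memA h4A hu2A) hu21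
    hu3 (st.not_adj_of_memA h1A hu3A) (st.not_adj_of_memA h2A hu3A)
      (st.not_adj_of_memA h3A hu3A) (st.not_adj_of_memA h4A hu3A) hu31 hu32
  have := st.hle6 _ hleg
  simp at this

/-- Any two distinct vertices of `A` have a common non-neighbor in `B`. -/
lemma O_nonempty (st : Setup G n k A B) (a₁ a₂ : V) (h1 : a₁ ∈ A) (h2 : a₂ ∈ A)
    (hne : a₁ ≠ a₂) : (B \ (G.neighborSet a₁ ∪ G.neighborSet a₂)).Nonempty := by
  by_contra hO
  rw [Set.not_nonempty_iff_eq_empty, Set.diff_eq_empty] at hO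
  obtain ⟨b1, b2, b3, u2, u3, hb1B, hb2B, hb3B, hb12, hb13, hb23,
    hu2, hu21, hu3, hu31, hu32⟩ := st.triple
  have htA : (A \ (G.neighborSet b1 ∪ G.neighborSet b2 ∪ G.neighborSet b3)).Nonempty := by
    by_contra ht
    rw [Set.not_nonempty_iff_eq_empty, Set.diff_eq_empty] at ht
    have hdom : IsTotalDomSet G {a₁, a₂, b1, b2, b3} := by
      intro v
      rcases st.hcover v with hv | hv
      · rcases ht hv with (h | h) | h
        · exact ⟨b1, by simp, h.symm⟩
        · exact ⟨b2, by simp, h.symm⟩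
        · exact ⟨b3, by simp, h.symm⟩
      · rcases hO hv with h | h
        · exact ⟨a₁, by simp, h.symm⟩
        · exact ⟨a₂, by simp, h.symm⟩
    have h5 : ({a₁, a₂, b1, b2, b3} : Set V).ncard ≤ 5 := by
      have e1 : ({b3} : Set V).ncard = 1 := Set.ncard_singleton _
      have e2 := Set.ncard_insert_le b2 ({b3} : Set V)
      have e3 := Set.ncard_insert_le b1 ({b2, b3} : Set V)
      have e4 := Set.ncard_insert_le a₂ ({b1, b2, b3} : Set V)
      have e5 := Set.ncard_insert_le a₁ ({a₂, b1, b2, b3} : Set V)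
      omega
    have := st.h6le _ hdom
    omega
  obtain ⟨t, htA', htN⟩ := htA
  obtain ⟨b4, hb4⟩ := st.hdeg t
  have hb4B : b4 ∈ B := by
    rcases st.hadj hb4 with ⟨h1', h2'⟩ | ⟨h1', h2'⟩
    · exact h2'
    · exact absurd ⟨htA', h1'⟩ (st.hdisj t)
  have ht1 : ¬ G.Adj b1 t := fun h => htN (Or.inl (Or.inl h))
  have ht2 : ¬ G.Adj b2 t := fun h => htN (Or.inl (Or.inr h))
  have ht3 : ¬ G.Adj b3 t := fun h => htN (Or.inr h)
  have h14 : b1 ≠ b4 := by rintro rfl; exact ht1 hb4.symm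
  have h24 : b2 ≠ b4 := by rintro rfl; exact ht2 hb4.symm
  have h34 : b3 ≠ b4 := by rintro rfl; exact ht3 hb4.symm
  exact st.symm.seven b1 b2 b3 b4 hb1B hb2B hb3B hb4B hb12 hb13 h14 hb23 h24 h34
    hu2 hu21 hu3 hu31 hu32 hb4.symm ht1 ht2 ht3

end Setup


lemma mkSetup {V : Type*} [Fintype V] {G : SimpleGraph V} {n k : ℕ} {A B : Set V}
    (hbip : IsBipartitionOf G A B) (hftf : FalseTwinFree G)
    (hcard : Fintype.card V = 2 * n)
    (hreg : ∀ v : V, (G.neighborSet v).ncard = n - k)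
    (ht : totalDomNum G = 6) (hg : grundyTotalDomNum G = 6)
    (hV : Nonempty V) : Setup G n k A B := by
  classical
  obtain ⟨hpart, hadj⟩ := hbip
  have hdisj : ∀ v : V, ¬ (v ∈ A ∧ v ∈ B) := by
    intro v hv
    rcases hpart v with h | h
    · exact h.2 hv.2
    · exact h.2 hv.1
  have hcover : ∀ v : V, v ∈ A ∨ v ∈ B := by
    intro v
    rcases hpart v with h | h
    · exact Or.inl h.1
    · exact Or.inr h.1
  have hNA : ∀ a ∈ A, G.neighborSet a ⊆ B := by
    intro a ha b hb
    rcases hadj hb with ⟨_, h⟩ | ⟨h, _⟩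
    · exact h
    · exact absurd ⟨ha, h⟩ (hdisj a)
  have hNB : ∀ b ∈ B, G.neighborSet b ⊆ A := by
    intro b hb a ha
    rcases hadj ha with ⟨h, _⟩ | ⟨_, h⟩
    · exact absurd ⟨h, hb⟩ (hdisj b)
    · exact h
  -- a total dominating set exists
  have hsetne : {c : ℕ | ∃ S : Set V, IsTotalDomSet G S ∧ S.ncard = c}.Nonempty := by
    by_contra h
    rw [Set.not_nonempty_iff_eq_empty] at h
    rw [totalDomNum, h, Nat.sInf_empty] at ht
    omega
  obtain ⟨c, S₀, hS₀, -⟩ := hsetne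
  have hdeg : ∀ v : V, ∃ u : V, G.Adj v u := fun v => by
    obtain ⟨u, _, h⟩ := hS₀ v; exact ⟨u, h⟩
  have h6le : ∀ S : Set V, IsTotalDomSet G S → 6 ≤ S.ncard := by
    intro S hS
    rw [← ht, totalDomNum]
    exact Nat.sInf_le ⟨S, hS, rfl⟩
  have hle6 : ∀ l : List V, IsLegalSeq G l → l.length ≤ 6 :=
    fun l hl => legal_length_le hdeg hg hl
  -- positive degree
  obtain ⟨v₀⟩ := hV
  have hpos : 1 ≤ n - k := by
    rw [← hreg v₀]
    rw [Nat.succ_le_iff, Set.ncard_pos]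
    obtain ⟨u, hu⟩ := hdeg v₀
    exact ⟨u, hu⟩
  have hkn : k < n := by omega
  -- cardinalities
  have hUn : A ∪ B = Set.univ := by
    ext v
    simp only [Set.mem_union, Set.mem_univ, iff_true]
    exact hcover v
  have hdisj' : Disjoint A B := Set.disjoint_left.2 fun v hv hv' => hdisj v ⟨hv, hv'⟩
  have hsum2 : A.ncard + B.ncard = 2 * n := by
    rw [← Set.ncard_union_eq hdisj', hUn, Set.ncard_univ, Nat.card_eq_fintype_card, hcard]
  set AF := A.toFinite.toFinset with hAFdef
  set BF := B.toFinite.toFinset with hBFdef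
  have hAFc : AF.card = A.ncard := (Set.ncard_eq_toFinset_card A A.toFinite).symm
  have hBFc : BF.card = B.ncard := (Set.ncard_eq_toFinset_card B B.toFinite).symm
  have hcA : ∀ a ∈ AF, (BF.filter (fun b => G.Adj a b)).card = n - k := by
    intro a ha
    rw [hAFdef, Set.Finite.mem_toFinset] at ha
    have hEq : (G.neighborSet a).toFinite.toFinset = BF.filter (fun b => G.Adj a b) := by
      ext b
      simp only [Set.Finite.mem_toFinset, Finset.mem_filter, hBFdef,
        SimpleGraph.mem_neighborSet]
      exact ⟨fun h => ⟨hNA a ha h, h⟩, fun h => h.2⟩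
    rw [← hEq, ← Set.ncard_eq_toFinset_card _ _]
    exact hreg a
  have hcB : ∀ b ∈ BF, (AF.filter (fun a => G.Adj b a)).card = n - k := by
    intro b hb
    rw [hBFdef, Set.Finite.mem_toFinset] at hb
    have hEq : (G.neighborSet b).toFinite.toFinset = AF.filter (fun a => G.Adj b a) := by
      ext a
      simp only [Set.Finite.mem_toFinset, Finset.mem_filter, hAFdef,
        SimpleGraph.mem_neighborSet]
      exact ⟨fun h => ⟨hNB b hb h, h⟩, fun h => h.2⟩
    rw [← hEq, ← Set.ncard_eq_toFinset_card _ _]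
    exact hreg b
  have hflip : ∑ a ∈ AF, (BF.filter (fun b => G.Adj a b)).card
      = ∑ b ∈ BF, (AF.filter (fun a => G.Adj b a)).card := by
    simp_rw [Finset.card_filter]
    rw [Finset.sum_comm]
    exact Finset.sum_congr rfl fun b _ => Finset.sum_congr rfl fun a _ => by
      rw [SimpleGraph.adj_comm]
  have hsA : ∑ a ∈ AF, (BF.filter (fun b => G.Adj a b)).card = AF.card * (n - k) := by
    rw [Finset.sum_congr rfl hcA, Finset.sum_const, smul_eq_mul]
  have hsB : ∑ b ∈ BF, (AF.filter (fun a => G.Adj b a)).card = BF.card * (n - k) := by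
    rw [Finset.sum_congr rfl hcB, Finset.sum_const, smul_eq_mul]
  have hABeq : A.ncard = B.ncard := by
    have := hflip
    rw [hsA, hsB] at this
    rw [← hAFc, ← hBFc]
    exact Nat.eq_of_mul_eq_mul_right (by omega) this
  have hcardA : A.ncard = n := by omega
  have hcardB : B.ncard = n := by omega
  -- the non-neighborhood size
  have hM' : ∀ a ∈ A, (B \ G.neighborSet a).ncard = n - (n - k) := by
    intro a ha
    rw [Set.ncard_diff (hNA a ha), hcardB, hreg a]
  have hM'' : ∀ b ∈ B, (A \ G.neighborSet b).ncard = n - (n - k) := by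
    intro b hb
    rw [Set.ncard_diff (hNB b hb), hcardA, hreg b]
  -- k ≥ 2
  have hAne : A.Nonempty := by
    rw [← Set.ncard_pos]
    omega
  obtain ⟨a₀, ha₀⟩ := hAne
  have hk2 : 2 ≤ k := by
    by_contra hklt
    push_neg at hklt
    interval_cases k
    · -- k = 0 : complete bipartite
      have hcov : ∀ a ∈ A, B ⊆ G.neighborSet a := by
        intro a ha
        rw [← Set.diff_eq_empty, ← Set.ncard_eq_zero (B \ G.neighborSet a).toFinite]
        rw [hM' a ha]
        omega
      have hcov' : ∀ b ∈ B, A ⊆ G.neighborSet b := by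
        intro b hb
        rw [← Set.diff_eq_empty, ← Set.ncard_eq_zero (A \ G.neighborSet b).toFinite]
        rw [hM'' b hb]
        omega
      obtain ⟨b₀, hb₀⟩ := hdeg a₀
      have hb₀B : b₀ ∈ B := hNA a₀ ha₀ hb₀
      have hdom : IsTotalDomSet G {a₀, b₀} := by
        intro v
        rcases hcover v with hv | hv
        · exact ⟨b₀, by simp, hcov v hv hb₀B⟩
        · exact ⟨a₀, by simp, (hcov' v hv ha₀ : G.Adj v a₀)⟩
      have h6 := h6le _ hdom
      have e1 : ({b₀} : Set V).ncard = 1 := Set.ncard_singleton _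
      have e2 := Set.ncard_insert_le a₀ ({b₀} : Set V)
      omega
    · -- k = 1
      have hA2 : 1 < A.ncard := by omega
      have hB2 : 1 < B.ncard := by omega
      obtain ⟨a₁', ha₁', hane⟩ := Set.exists_ne_of_one_lt_ncard hA2 a₀
      have hBne : B.Nonempty := by rw [← Set.ncard_pos]; omega
      obtain ⟨b₀, hb₀⟩ := hBne
      obtain ⟨b₁', hb₁', hbne⟩ := Set.exists_ne_of_one_lt_ncard hB2 b₀
      -- each non-neighborhood is a singleton
      have hsingA : ∀ a ∈ A, ∃ m, B \ G.neighborSet a = {m} := by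
        intro a ha
        rw [← Set.ncard_eq_one]
        rw [hM' a ha]; omega
      have hsingB : ∀ b ∈ B, ∃ m, A \ G.neighborSet b = {m} := by
        intro b hb
        rw [← Set.ncard_eq_one]
        rw [hM'' b hb]; omega
      obtain ⟨m₁, hm₁⟩ := hsingA a₀ ha₀
      obtain ⟨m₂, hm₂⟩ := hsingA a₁' ha₁'
      obtain ⟨m₃, hm₃⟩ := hsingB b₀ hb₀
      obtain ⟨m₄, hm₄⟩ := hsingB b₁' hb₁'
      have hm12 : m₁ ≠ m₂ := by
        rintro rfl
        have : G.neighborSet a₀ = G.neighborSet a₁' := by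
          have e1 : G.neighborSet a₀ = B \ (B \ G.neighborSet a₀) :=
            (Set.diff_diff_cancel_left (hNA a₀ ha₀)).symm
          have e2 : G.neighborSet a₁' = B \ (B \ G.neighborSet a₁') :=
            (Set.diff_diff_cancel_left (hNA a₁' ha₁')).symm
          rw [e1, e2, hm₁, hm₂]
        exact hftf a₀ a₁' (Ne.symm hane) this
      have hm34 : m₃ ≠ m₄ := by
        rintro rfl
        have : G.neighborSet b₀ = G.neighborSet b₁' := by
          have e1 : G.neighborSet b₀ = A \ (A \ G.neighborSet b₀) :=
            (Set.diff_diff_cancel_left (hNB b₀ hb₀)).symm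
          have e2 : G.neighborSet b₁' = A \ (A \ G.neighborSet b₁') :=
            (Set.diff_diff_cancel_left (hNB b₁' hb₁')).symm
          rw [e1, e2, hm₃, hm₄]
        exact hftf b₀ b₁' (Ne.symm hbne) this
      have hdom : IsTotalDomSet G {a₀, a₁', b₀, b₁'} := by
        intro v
        rcases hcover v with hv | hv
        · by_cases h : v ∈ G.neighborSet b₀
          · exact ⟨b₀, by simp, (h : G.Adj b₀ v).symm⟩
          · have e3 : v = m₃ := by
              have h3 : v ∈ A \ G.neighborSet b₀ := ⟨hv, h⟩
              rw [hm₃] at h3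
              exact h3
            have hv4 : v ∈ G.neighborSet b₁' := by
              by_contra h4
              have h5 : v ∈ A \ G.neighborSet b₁' := ⟨hv, h4⟩
              rw [hm₄] at h5
              exact hm34 (e3.symm.trans h5)
            exact ⟨b₁', by simp, (hv4 : G.Adj b₁' v).symm⟩
        · by_cases h : v ∈ G.neighborSet a₀
          · exact ⟨a₀, by simp, (h : G.Adj a₀ v).symm⟩
          · have e3 : v = m₁ := by
              have h3 : v ∈ B \ G.neighborSet a₀ := ⟨hv, h⟩
              rw [hm₁] at h3
              exact h3
            have hv2 : v ∈ G.neighborSet a₁' := by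
              by_contra h2
              have h5 : v ∈ B \ G.neighborSet a₁' := ⟨hv, h2⟩
              rw [hm₂] at h5
              exact hm12 (e3.symm.trans h5)
            exact ⟨a₁', by simp, (hv2 : G.Adj a₁' v).symm⟩
      have h6 := h6le _ hdom
      have e1 : ({b₁'} : Set V).ncard = 1 := Set.ncard_singleton _
      have e2 := Set.ncard_insert_le b₀ ({b₁'} : Set V)
      have e3 := Set.ncard_insert_le a₁' ({b₀, b₁'} : Set V)
      have e4 := Set.ncard_insert_le a₀ ({a₁', b₀, b₁'} : Set V)
      omega
  exact ⟨hadj, hdisj, hdeg, hftf, hreg, hcardA, hcardB, hk2, hkn, hle6, h6le⟩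


/-- Every vertex of `A'` is adjacent to all of `B₁ ∪ B₂` and
has exactly `k − 1` non-neighbors in `B'`. -/
theorem claim_k_minus_one
    {V : Type*} [Fintype V] (G : SimpleGraph V) (n k : ℕ) (A B : Set V)
    (hbip : IsBipartitionOf G A B) (hftf : FalseTwinFree G)
    (hcard : Fintype.card V = 2 * n)
    (hreg : ∀ v : V, (G.neighborSet v).ncard = n - k)
    (ht : totalDomNum G = 6) (hg : grundyTotalDomNum G = 6)
    (a₁ a₂ : V) (ha₁ : a₁ ∈ A) (ha₂ : a₂ ∈ A) (hne : a₁ ≠ a₂)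
    (B₁ B₂ B' A' : Set V)
    (hB₂ : B₂ = G.neighborSet a₁ \ G.neighborSet a₂)
    (hB₁ : B₁ = G.neighborSet a₂ \ G.neighborSet a₁)
    (hB' : B' = G.neighborSet a₁ ∩ G.neighborSet a₂)
    (hA' : A' = {a ∈ A \ {a₁, a₂} | G.neighborSet a ⊆ B₁ ∪ B₂ ∪ B'})
    (x : V) (hx : x ∈ A') :
    B₁ ∪ B₂ ⊆ G.neighborSet x ∧ (B' \ G.neighborSet x).ncard = k - 1 := by
  classical
  subst hB₁ hB₂ hB' hA'
  have st : Setup G n k A B := mkSetup hbip hftf hcard hreg ht hg ⟨a₁⟩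
  simp only [Set.mem_setOf_eq, Set.mem_diff, Set.mem_insert_iff,
    Set.mem_singleton_iff] at hx
  obtain ⟨⟨hxA, hx12⟩, hxsub⟩ := hx
  push_neg at hx12
  obtain ⟨hxa₁, hxa₂⟩ := hx12
  have hxsubN : G.neighborSet x ⊆ G.neighborSet a₁ ∪ G.neighborSet a₂ := by
    intro b hb
    rcases hxsub hb with (h | h) | h
    · exact Or.inr h.1
    · exact Or.inl h.1
    · exact Or.inl h.1
  obtain ⟨o, hoB, hoN⟩ := st.O_nonempty a₁ a₂ ha₁ ha₂ hne
  have hoa₁ : ¬ G.Adj a₁ o := fun h => hoN (Or.inl h)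
  have hoa₂ : ¬ G.Adj a₂ o := fun h => hoN (Or.inr h)
  have hox : ¬ G.Adj x o := fun h => hoN (hxsubN h)
  obtain ⟨c, hc⟩ := st.hdeg o
  have hcA : c ∈ A := st.memA_of_adj hoB hc
  have hca₁ : a₁ ≠ c := by rintro rfl; exact hoa₁ hc.symm
  have hca₂ : a₂ ≠ c := by rintro rfl; exact hoa₂ hc.symm
  have hcx : x ≠ c := by rintro rfl; exact hox hc.symm
  -- Part 1 : B₁ ∪ B₂ ⊆ N(x)
  have hpart1 : (G.neighborSet a₂ \ G.neighborSet a₁) ∪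
      (G.neighborSet a₁ \ G.neighborSet a₂) ⊆ G.neighborSet x := by
    rintro y (⟨hy2, hy1⟩ | ⟨hy1, hy2⟩)
    · by_contra hyx
      obtain ⟨w2, hw2x, hw2a⟩ := st.diffne a₁ x (Ne.symm hxa₁)
      exact st.seven a₁ x a₂ c ha₁ hxA ha₂ hcA
        (Ne.symm hxa₁) hne hca₁ hxa₂ hcx hca₂
        (hw2x : G.Adj x w2) (hw2a : ¬ G.Adj a₁ w2)
        (hy2 : G.Adj a₂ y) (hy1 : ¬ G.Adj a₁ y) (hyx : ¬ G.Adj x y)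
        hc.symm hoa₁ hox hoa₂
    · by_contra hyx
      obtain ⟨w2, hw2x, hw2a⟩ := st.diffne a₂ x (Ne.symm hxa₂)
      exact st.seven a₂ x a₁ c ha₂ hxA ha₁ hcA
        (Ne.symm hxa₂) (Ne.symm hne) hca₂ hxa₁ hcx hca₁
        (hw2x : G.Adj x w2) (hw2a : ¬ G.Adj a₂ w2)
        (hy1 : G.Adj a₁ y) (hy2 : ¬ G.Adj a₂ y) (hyx : ¬ G.Adj x y)
        hc.symm hoa₂ hox hoa₁
  refine ⟨hpart1, ?_⟩
  -- Part 2 : the count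
  have hMx : (B \ G.neighborSet x).ncard = k := st.hM x hxA
  have hsplit : B \ G.neighborSet x =
      (B \ (G.neighborSet a₁ ∪ G.neighborSet a₂)) ∪
      ((G.neighborSet a₁ ∩ G.neighborSet a₂) \ G.neighborSet x) := by
    ext b
    simp only [Set.mem_diff, Set.mem_union, Set.mem_inter_iff]
    constructor
    · rintro ⟨hbB, hbx⟩
      by_cases h1 : b ∈ G.neighborSet a₁ <;> by_cases h2 : b ∈ G.neighborSet a₂
      · exact Or.inr ⟨⟨h1, h2⟩, hbx⟩
      · exact absurd (hpart1 (Or.inr ⟨h1, h2⟩)) hbx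
      · exact absurd (hpart1 (Or.inl ⟨h2, h1⟩)) hbx
      · exact Or.inl ⟨hbB, fun h => h.elim h1 h2⟩
    · rintro (⟨hbB, hb⟩ | ⟨⟨h1, h2⟩, hbx⟩)
      · exact ⟨hbB, fun hbx => hb (hxsubN hbx)⟩
      · exact ⟨st.hNA a₁ ha₁ h1, hbx⟩
  have hdisjOB : Disjoint (B \ (G.neighborSet a₁ ∪ G.neighborSet a₂))
      ((G.neighborSet a₁ ∩ G.neighborSet a₂) \ G.neighborSet x) := by
    rw [Set.disjoint_left]
    rintro b ⟨hbB, hbN⟩ ⟨⟨h1, h2⟩, _⟩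
    exact hbN (Or.inl h1)
  have hOle : (B \ (G.neighborSet a₁ ∪ G.neighborSet a₂)).ncard ≤ 1 := by
    by_contra hgt
    push_neg at hgt
    obtain ⟨o1, ho1, o2, ho2, ho12⟩ := (Set.one_lt_ncard (Set.toFinite _)).1 hgt
    have ho1a₁ : ¬ G.Adj a₁ o1 := fun h => ho1.2 (Or.inl h)
    have ho1a₂ : ¬ G.Adj a₂ o1 := fun h => ho1.2 (Or.inr h)
    have ho1x : ¬ G.Adj x o1 := fun h => ho1.2 (hxsubN h)
    have ho2a₁ : ¬ G.Adj a₁ o2 := fun h => ho2.2 (Or.inl h)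
    have ho2x : ¬ G.Adj x o2 := fun h => ho2.2 (hxsubN h)
    obtain ⟨c₃, hc₃o1, hc₃o2⟩ := st.diffne o2 o1 (Ne.symm ho12)
    obtain ⟨c₄, hc₄⟩ := st.hdeg o2
    have hc₃A : c₃ ∈ A := st.memA_of_adj ho1.1 (hc₃o1 : G.Adj o1 c₃)
    have hc₄A : c₄ ∈ A := st.memA_of_adj ho2.1 hc₄
    have h13 : a₁ ≠ c₃ := by rintro rfl; exact ho1a₁ (hc₃o1 : G.Adj o1 a₁).symm
    have h23 : x ≠ c₃ := by rintro rfl; exact ho1x (hc₃o1 : G.Adj o1 x).symm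
    have h14 : a₁ ≠ c₄ := by rintro rfl; exact ho2a₁ hc₄.symm
    have h24 : x ≠ c₄ := by rintro rfl; exact ho2x hc₄.symm
    have h34 : c₃ ≠ c₄ := by
      rintro rfl
      exact hc₃o2 (hc₄.symm.symm : G.Adj o2 c₃)
    obtain ⟨w2, hw2x, hw2a⟩ := st.diffne a₁ x (Ne.symm hxa₁)
    exact st.seven a₁ x c₃ c₄ ha₁ hxA hc₃A hc₄A
      (Ne.symm hxa₁) h13 h14 h23 h24 h34
      (hw2x : G.Adj x w2) (hw2a : ¬ G.Adj a₁ w2)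
      ((hc₃o1 : G.Adj o1 c₃).symm) ho1a₁ ho1x
      hc₄.symm ho2a₁ ho2x (fun h => hc₃o2 (h.symm : G.Adj o2 c₃))
  have hOpos : 0 < (B \ (G.neighborSet a₁ ∪ G.neighborSet a₂)).ncard := by
    rw [Set.ncard_pos]
    exact ⟨o, hoB, hoN⟩
  rw [hsplit, Set.ncard_union_eq hdisjOB] at hMx
  have hk2 := st.hk2
  omega
end

section
/- Let G be an (n−k)-regular bipartite false twin-free graph on 2n vertices with bipartition A ∪ B and γ_t(G) = γ_gr^t(G) = 6, let a_1 ≠ a_2 be vertices of A, and set B_2 = N(a_1)\N(a_2), B_1 = N(a_2)\N(a_1), B' = N(a_1) ∩ N(a_2), and A' = {a ∈ A\{a_1,a_2} : N(a) ⊆ B_1 ∪ B_2 ∪ B'}. For a ∈ A' let B_a = B' \ N(a) be the set of non-neighbors of a in B'. Then the family {B_a : a ∈ A'} is a partition of B' into pairwise disjoint nonempty sets, i.e., the sets B_a for a ∈ A' are pairwise disjoint and their union is B'. -/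
lemma legal_nil {V : Type*} (G : SimpleGraph V) : IsLegalSeq G [] := by
  refine ⟨List.nodup_nil, ?_⟩
  intro i
  exact absurd i.2 (by simp)

lemma legal_append_singleton {V : Type*} {G : SimpleGraph V} {l : List V} {u : V}
    (hl : IsLegalSeq G l) (hu : u ∉ l) (w : V) (hw : G.Adj u w)
    (hnw : ∀ x ∈ l, ¬ G.Adj x w) : IsLegalSeq G (l ++ [u]) := by
  have hlen : (l ++ [u]).length = l.length + 1 := by simp
  constructor
  · simp [List.nodup_append, hl.1, hu]
    rintro a ha rfl
    exact hu ha
  · intro i hi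
    by_cases hcase : (i : ℕ) < l.length
    · obtain ⟨w', hw', hw''⟩ := hl.2 ⟨i, hcase⟩ hi
      refine ⟨w', ?_, ?_⟩
      · have h1 : (l ++ [u]).get i = l.get ⟨i, hcase⟩ := by
          simp only [List.get_eq_getElem]
          exact List.getElem_append_left hcase
        rw [h1]; exact hw'
      · intro j hj
        have hjl : (j : ℕ) < l.length := lt_trans hj hcase
        have h1 : (l ++ [u]).get j = l.get ⟨j, hjl⟩ := by
          simp only [List.get_eq_getElem]
          exact List.getElem_append_left hjl
        rw [h1]; exact hw'' ⟨j, hjl⟩ hj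
    · have hieq : (i : ℕ) = l.length := by
        have h2 := i.2
        simp only [hlen] at h2
        omega
      have h1 : (l ++ [u]).get i = u := by
        simp [List.get_eq_getElem, hieq]
      refine ⟨w, by rw [h1]; exact hw, ?_⟩
      intro j hj
      have hjl : (j : ℕ) < l.length := by omega
      have h1 : (l ++ [u]).get j = l.get ⟨j, hjl⟩ := by
        simp only [List.get_eq_getElem]
        exact List.getElem_append_left hjl
      rw [h1]
      exact hnw _ (by rw [List.get_eq_getElem]; exact List.getElem_mem hjl)

lemma tds_le_six {V : Type*} [Fintype V] {G : SimpleGraph V}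
    (hg : grundyTotalDomNum G = 6) {l : List V} (hl : IsTotalDomSeq G l) :
    l.length ≤ 6 := by
  have hbdd : BddAbove {k : ℕ | ∃ l : List V, IsTotalDomSeq G l ∧ l.length = k} := by
    refine ⟨Fintype.card V, ?_⟩
    rintro k ⟨l', hl', rfl⟩
    exact hl'.1.1.length_le_card
  have h1 := le_csSup hbdd ⟨l, hl, rfl⟩
  have h6 : sSup {k : ℕ | ∃ l : List V, IsTotalDomSeq G l ∧ l.length = k} = 6 := hg
  rwa [h6] at h1

lemma exists_tds_ext {V : Type*} [Fintype V] {G : SimpleGraph V}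
    (hiso : ∀ v : V, ∃ u : V, G.Adj v u) :
    ∀ (m : ℕ) (l : List V), IsLegalSeq G l → Fintype.card V ≤ l.length + m →
    ∃ l' : List V, IsTotalDomSeq G l' ∧ l.length ≤ l'.length := by
  intro m
  induction m with
  | zero =>
    intro l hl hcard
    by_cases hT : IsTotalDomSet G {v | v ∈ l}
    · exact ⟨l, ⟨hl, hT⟩, le_rfl⟩
    · exfalso
      rw [IsTotalDomSet] at hT
      push_neg at hT
      obtain ⟨v, hv⟩ := hT
      obtain ⟨u, hu⟩ := hiso v
      have hunl : u ∉ l := fun h => hv u h hu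
      have hleg := legal_append_singleton hl hunl v hu.symm
        (fun x hx hadj => hv x hx hadj.symm)
      have := hleg.1.length_le_card
      simp at this
      omega
  | succ m ih =>
    intro l hl hcard
    by_cases hT : IsTotalDomSet G {v | v ∈ l}
    · exact ⟨l, ⟨hl, hT⟩, le_rfl⟩
    · rw [IsTotalDomSet] at hT
      push_neg at hT
      obtain ⟨v, hv⟩ := hT
      obtain ⟨u, hu⟩ := hiso v
      have hunl : u ∉ l := fun h => hv u h hu
      have hleg := legal_append_singleton hl hunl v hu.symm
        (fun x hx hadj => hv x hx hadj.symm)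
      obtain ⟨l', hl', hlen⟩ := ih (l ++ [u]) hleg (by simp; omega)
      exact ⟨l', hl', by simp at hlen; omega⟩

lemma no7 {V : Type*} [Fintype V] {G : SimpleGraph V}
    (hiso : ∀ v : V, ∃ u : V, G.Adj v u)
    (hg : grundyTotalDomNum G = 6) {l : List V} (hl : IsLegalSeq G l) :
    l.length ≤ 6 := by
  obtain ⟨l', hl', hlen⟩ := exists_tds_ext hiso (Fintype.card V) l hl (by omega)
  exact le_trans hlen (tds_le_six hg hl')

/-- The sets `B_a = B' \ N(a)` of non-neighbors in `B'` of the
vertices `a ∈ A'` are nonempty, pairwise disjoint, and partition `B'`. -/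
theorem claim_partition
    {V : Type*} [Fintype V] (G : SimpleGraph V) (n k : ℕ) (A B : Set V)
    (hbip : IsBipartitionOf G A B) (hftf : FalseTwinFree G)
    (hcard : Fintype.card V = 2 * n)
    (hreg : ∀ v : V, (G.neighborSet v).ncard = n - k)
    (ht : totalDomNum G = 6) (hg : grundyTotalDomNum G = 6)
    (a₁ a₂ : V) (ha₁ : a₁ ∈ A) (ha₂ : a₂ ∈ A) (hne : a₁ ≠ a₂)
    (B₁ B₂ B' A' : Set V)
    (hB₂ : B₂ = G.neighborSet a₁ \ G.neighborSet a₂)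
    (hB₁ : B₁ = G.neighborSet a₂ \ G.neighborSet a₁)
    (hB' : B' = G.neighborSet a₁ ∩ G.neighborSet a₂)
    (hA' : A' = {a ∈ A \ {a₁, a₂} | G.neighborSet a ⊆ B₁ ∪ B₂ ∪ B'})
    :
    (∀ a ∈ A', (B' \ G.neighborSet a).Nonempty) ∧
    (∀ a ∈ A', ∀ a' ∈ A', a ≠ a' →
      Disjoint (B' \ G.neighborSet a) (B' \ G.neighborSet a')) ∧
    (⋃ a ∈ A', B' \ G.neighborSet a) = B' := by
  classical
  -- exclusivity / side helpers
  have hexcl : ∀ {X Y : Set V}, IsBipartitionOf G X Y → ∀ v : V, v ∈ X → v ∈ Y → False := by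
    intro X Y hb v h1 h2
    rcases hb.1 v with ⟨_, h⟩ | ⟨_, h⟩
    · exact h h2
    · exact h h1
  have hside : ∀ {X Y : Set V}, IsBipartitionOf G X Y → ∀ {u w : V}, u ∈ X → G.Adj u w → w ∈ Y := by
    intro X Y hb u w hu hadj
    rcases hb.2 hadj with ⟨_, h⟩ | ⟨h, _⟩
    · exact h
    · exact (hexcl hb u hu h).elim
  -- no isolated vertices
  have hiso : ∀ v : V, ∃ u : V, G.Adj v u := by
    by_contra hcon
    push_neg at hcon
    obtain ⟨v, hv⟩ := hcon
    have h0 : (G.neighborSet v).ncard = 0 := by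
      have he : G.neighborSet v = ∅ := by
        ext u; simp only [SimpleGraph.mem_neighborSet, Set.mem_empty_iff_false, iff_false]
        exact hv u
      simp [he]
    have hk : n - k = 0 := by rw [← hreg v]; exact h0
    have h1 : G.neighborSet a₁ = ∅ := by
      have := hreg a₁; rw [hk] at this
      exact Set.ncard_eq_zero (Set.toFinite _) |>.mp this
    have h2 : G.neighborSet a₂ = ∅ := by
      have := hreg a₂; rw [hk] at this
      exact Set.ncard_eq_zero (Set.toFinite _) |>.mp this
    exact hftf a₁ a₂ hne (h1.trans h2.symm)
  -- pair step: distinct vertices have a fresh neighbor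
  have pair_step : ∀ u v : V, u ≠ v → ∃ w, G.Adj v w ∧ ¬ G.Adj u w := by
    intro u v huv
    by_contra hcon
    push_neg at hcon
    have hsub : G.neighborSet v ⊆ G.neighborSet u := fun w hw => hcon w hw
    have heq := Set.eq_of_subset_of_ncard_le hsub (by rw [hreg u, hreg v]) (Set.toFinite _)
    exact hftf v u huv.symm heq
  -- every total dominating set has at least 6 elements
  have tds_ge : ∀ S : Set V, IsTotalDomSet G S → 6 ≤ S.ncard := by
    intro S hS
    have h1 : sInf {k : ℕ | ∃ S : Set V, IsTotalDomSet G S ∧ S.ncard = k} = 6 := ht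
    have h2 := Nat.sInf_le (s := {k : ℕ | ∃ S : Set V, IsTotalDomSet G S ∧ S.ncard = k})
      ⟨S, hS, rfl⟩
    omega
  -- GL : there is a legal triple on side X
  have hGL : ∀ X Y : Set V, IsBipartitionOf G X Y → ∀ x₀ y₀ : V, x₀ ∈ X → y₀ ∈ X → x₀ ≠ y₀ →
      ∃ x y z : V, x ∈ X ∧ y ∈ X ∧ z ∈ X ∧ x ≠ y ∧
        ∃ w : V, G.Adj z w ∧ ¬ G.Adj x w ∧ ¬ G.Adj y w := by
    intro X Y hb x₀ y₀ hx₀ hy₀ hxy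
    by_contra hcon
    have hb' : IsBipartitionOf G Y X := ⟨fun v => (hb.1 v).symm, fun p q h => (hb.2 h).symm⟩
    have hD : ∀ x y z w : V, x ∈ X → y ∈ X → z ∈ X → x ≠ y → G.Adj z w →
        G.Adj x w ∨ G.Adj y w := by
      intro x y z w hx hy hz hxy' hzw
      by_contra hc
      push_neg at hc
      exact hcon ⟨x, y, z, hx, hy, hz, hxy', w, hzw, hc.1, hc.2⟩
    have huniq : ∀ b ∈ Y, ∀ y y' : V, y ∈ X → y' ∈ X → ¬ G.Adj b y → ¬ G.Adj b y' → y = y' := by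
      intro b hbY y y' hy hy' h1 h2
      by_contra hyy
      obtain ⟨z, hz⟩ := hiso b
      have hzX : z ∈ X := hside hb' hbY hz
      rcases hD y y' z b hy hy' hzX hyy hz.symm with h | h
      · exact h1 h.symm
      · exact h2 h.symm
    obtain ⟨w₁, hw₁a, hw₁n⟩ := pair_step x₀ y₀ hxy
    obtain ⟨w₂, hw₂a, hw₂n⟩ := pair_step y₀ x₀ hxy.symm
    have hw₁Y : w₁ ∈ Y := hside hb hy₀ hw₁a
    have hw₂Y : w₂ ∈ Y := hside hb hx₀ hw₂a
    have hw12 : w₁ ≠ w₂ := by rintro rfl; exact hw₁n hw₂a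
    have hcov : ∀ a ∈ X, G.Adj a w₁ ∨ G.Adj a w₂ := by
      intro a ha
      by_contra hc
      push_neg at hc
      have hNeq : G.neighborSet w₁ = G.neighborSet w₂ := by
        ext t
        simp only [SimpleGraph.mem_neighborSet]
        constructor
        · intro h
          have htX : t ∈ X := hside hb' hw₁Y h
          have hta : t ≠ a := by rintro rfl; exact hc.1 h.symm
          by_contra h2
          exact hta (huniq w₂ hw₂Y t a htX ha h2 (fun hh => hc.2 hh.symm))
        · intro h
          have htX : t ∈ X := hside hb' hw₂Y h
          have hta : t ≠ a := by rintro rfl; exact hc.2 h.symm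
          by_contra h2
          exact hta (huniq w₁ hw₁Y t a htX ha h2 (fun hh => hc.1 hh.symm))
      exact hftf w₁ w₂ hw12 hNeq
    have hcovY : ∀ b ∈ Y, G.Adj b x₀ ∨ G.Adj b y₀ := by
      intro b hbY
      obtain ⟨z, hz⟩ := hiso b
      have hzX : z ∈ X := hside hb' hbY hz
      rcases hD x₀ y₀ z b hx₀ hy₀ hzX hxy hz.symm with h | h
      · exact Or.inl h.symm
      · exact Or.inr h.symm
    have hTDS : IsTotalDomSet G {x₀, y₀, w₁, w₂} := by
      intro v
      rcases hb.1 v with ⟨hvX, _⟩ | ⟨hvY, _⟩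
      · rcases hcov v hvX with h | h
        · exact ⟨w₁, by simp, h⟩
        · exact ⟨w₂, by simp, h⟩
      · rcases hcovY v hvY with h | h
        · exact ⟨x₀, by simp, h⟩
        · exact ⟨y₀, by simp, h⟩
    have h1 := Set.ncard_insert_le x₀ ({y₀, w₁, w₂} : Set V)
    have h2 := Set.ncard_insert_le y₀ ({w₁, w₂} : Set V)
    have h3 := Set.ncard_insert_le w₁ ({w₂} : Set V)
    have h4 : ({w₂} : Set V).ncard = 1 := Set.ncard_singleton _
    have h6 := tds_ge _ hTDS
    omega
  -- L1 : no pair on side X dominates all of side Y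
  have hL1 : ∀ X Y : Set V, IsBipartitionOf G X Y → ∀ u u' : V, u ∈ X → u' ∈ X → u ≠ u' →
      ∃ c : V, c ∈ Y ∧ ¬ G.Adj u c ∧ ¬ G.Adj u' c := by
    intro X Y hb u u' hu hu' huu
    by_contra hcon
    have hc : ∀ c ∈ Y, G.Adj u c ∨ G.Adj u' c := by
      intro c hcY
      by_contra h
      push_neg at h
      exact hcon ⟨c, hcY, h.1, h.2⟩
    have hb' : IsBipartitionOf G Y X := ⟨fun v => (hb.1 v).symm, fun p q h => (hb.2 h).symm⟩
    have hXX : ∀ {p q : V}, p ∈ X → q ∈ X → ¬ G.Adj p q :=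
      fun hp hq hadj => hexcl hb _ hq (hside hb hp hadj)
    have hYX : ∀ {p q : V}, q ∈ Y → p ∈ X → q ≠ p :=
      fun hq hp h => hexcl hb _ hp (h ▸ hq)
    obtain ⟨x, y, z, hx, hy, hz, hxy, w, hzw, hxw, hyw⟩ := hGL X Y hb u u' hu hu' huu
    have step : ∀ S : Set V, u ∈ S → u' ∈ S → S.ncard < 6 →
        ∃ v ∈ X, ∀ t ∈ S, ¬ G.Adj v t := by
      intro S huS hu'S hcard
      have hnT : ¬ IsTotalDomSet G S := fun h => by have := tds_ge S h; omega
      rw [IsTotalDomSet] at hnT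
      push_neg at hnT
      obtain ⟨v, hv⟩ := hnT
      refine ⟨v, ?_, fun t htS hadj => hv t htS hadj⟩
      rcases hb.1 v with ⟨h, _⟩ | ⟨h, _⟩
      · exact h
      · rcases hc v h with hh | hh
        · exact absurd hh.symm (hv u huS)
        · exact absurd hh.symm (hv u' hu'S)
    -- greedy construction of b₁..b₄
    obtain ⟨v₁, hv₁X, hv₁⟩ := step {u, u'} (by simp) (by simp) (by
      have h1 := Set.ncard_insert_le u ({u'} : Set V)
      have h2 : ({u'} : Set V).ncard = 1 := Set.ncard_singleton _
      omega)
    obtain ⟨b₁, hab₁⟩ := hiso v₁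
    have hb₁Y : b₁ ∈ Y := hside hb hv₁X hab₁
    obtain ⟨v₂, hv₂X, hv₂⟩ := step {u, u', b₁} (by simp) (by simp) (by
      have h1 := Set.ncard_insert_le u ({u', b₁} : Set V)
      have h2 := Set.ncard_insert_le u' ({b₁} : Set V)
      have h3 : ({b₁} : Set V).ncard = 1 := Set.ncard_singleton _
      omega)
    obtain ⟨b₂, hab₂⟩ := hiso v₂
    have hb₂Y : b₂ ∈ Y := hside hb hv₂X hab₂
    obtain ⟨v₃, hv₃X, hv₃⟩ := step {u, u', b₁, b₂} (by simp) (by simp) (by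
      have h1 := Set.ncard_insert_le u ({u', b₁, b₂} : Set V)
      have h2 := Set.ncard_insert_le u' ({b₁, b₂} : Set V)
      have h3 := Set.ncard_insert_le b₁ ({b₂} : Set V)
      have h4 : ({b₂} : Set V).ncard = 1 := Set.ncard_singleton _
      omega)
    obtain ⟨b₃, hab₃⟩ := hiso v₃
    have hb₃Y : b₃ ∈ Y := hside hb hv₃X hab₃
    obtain ⟨v₄, hv₄X, hv₄⟩ := step {u, u', b₁, b₂, b₃} (by simp) (by simp) (by
      have h1 := Set.ncard_insert_le u ({u', b₁, b₂, b₃} : Set V)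
      have h2 := Set.ncard_insert_le u' ({b₁, b₂, b₃} : Set V)
      have h3 := Set.ncard_insert_le b₁ ({b₂, b₃} : Set V)
      have h4 := Set.ncard_insert_le b₂ ({b₃} : Set V)
      have h5 : ({b₃} : Set V).ncard = 1 := Set.ncard_singleton _
      omega)
    obtain ⟨b₄, hab₄⟩ := hiso v₄
    have hb₄Y : b₄ ∈ Y := hside hb hv₄X hab₄
    -- non-adjacency facts
    have hv₂b₁ : ¬ G.Adj v₂ b₁ := hv₂ b₁ (by simp)
    have hv₃b₁ : ¬ G.Adj v₃ b₁ := hv₃ b₁ (by simp)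
    have hv₃b₂ : ¬ G.Adj v₃ b₂ := hv₃ b₂ (by simp)
    have hv₄b₁ : ¬ G.Adj v₄ b₁ := hv₄ b₁ (by simp)
    have hv₄b₂ : ¬ G.Adj v₄ b₂ := hv₄ b₂ (by simp)
    have hv₄b₃ : ¬ G.Adj v₄ b₃ := hv₄ b₃ (by simp)
    -- distinctness of the b's
    have hb21 : b₂ ≠ b₁ := by rintro rfl; exact hv₂b₁ hab₂
    have hb31 : b₃ ≠ b₁ := by rintro rfl; exact hv₃b₁ hab₃
    have hb32 : b₃ ≠ b₂ := by rintro rfl; exact hv₃b₂ hab₃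
    have hb41 : b₄ ≠ b₁ := by rintro rfl; exact hv₄b₁ hab₄
    have hb42 : b₄ ≠ b₂ := by rintro rfl; exact hv₄b₂ hab₄
    have hb43 : b₄ ≠ b₃ := by rintro rfl; exact hv₄b₃ hab₄
    -- distinctness of x,y,z
    have hzx : z ≠ x := by rintro rfl; exact hxw hzw
    have hzy : z ≠ y := by rintro rfl; exact hyw hzw
    -- build the legal 7-list
    obtain ⟨wx, hwx⟩ := hiso x
    have l1 : IsLegalSeq G [x] := by
      have := legal_append_singleton (legal_nil G) (by simp) wx hwx (by simp)
      simpa using this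
    obtain ⟨wy, hwy, hwyx⟩ := pair_step x y hxy
    have l2 : IsLegalSeq G [x, y] := by
      have := legal_append_singleton l1 (by
        simp only [List.mem_singleton]
        exact fun h => hxy h.symm) wy hwy (by
        intro t ht
        simp only [List.mem_singleton] at ht
        subst ht; exact hwyx)
      simpa using this
    have l3 : IsLegalSeq G [x, y, z] := by
      have := legal_append_singleton l2 (by
        simp only [List.mem_cons, List.mem_singleton, List.not_mem_nil, or_false]
        push_neg
        exact ⟨hzx, hzy⟩) w hzw (by
        intro t ht
        simp only [List.mem_cons, List.mem_singleton, List.not_mem_nil, or_false] at ht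
        rcases ht with rfl | rfl
        · exact hxw
        · exact hyw)
      simpa using this
    have l4 : IsLegalSeq G [x, y, z, b₁] := by
      have := legal_append_singleton l3 (by
        simp only [List.mem_cons, List.mem_singleton, List.not_mem_nil, or_false]
        push_neg
        exact ⟨hYX hb₁Y hx, hYX hb₁Y hy, hYX hb₁Y hz⟩) v₁ hab₁.symm (by
        intro t ht
        simp only [List.mem_cons, List.mem_singleton, List.not_mem_nil, or_false] at ht
        rcases ht with rfl | rfl | rfl
        · exact hXX hx hv₁X
        · exact hXX hy hv₁X
        · exact hXX hz hv₁X)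
      simpa using this
    have l5 : IsLegalSeq G [x, y, z, b₁, b₂] := by
      have := legal_append_singleton l4 (by
        simp only [List.mem_cons, List.mem_singleton, List.not_mem_nil, or_false]
        push_neg
        exact ⟨hYX hb₂Y hx, hYX hb₂Y hy, hYX hb₂Y hz, hb21⟩) v₂ hab₂.symm (by
        intro t ht
        simp only [List.mem_cons, List.mem_singleton, List.not_mem_nil, or_false] at ht
        rcases ht with rfl | rfl | rfl | rfl
        · exact hXX hx hv₂X
        · exact hXX hy hv₂X
        · exact hXX hz hv₂X
        · exact fun h => hv₂b₁ h.symm)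
      simpa using this
    have l6 : IsLegalSeq G [x, y, z, b₁, b₂, b₃] := by
      have := legal_append_singleton l5 (by
        simp only [List.mem_cons, List.mem_singleton, List.not_mem_nil, or_false]
        push_neg
        exact ⟨hYX hb₃Y hx, hYX hb₃Y hy, hYX hb₃Y hz, hb31, hb32⟩) v₃ hab₃.symm (by
        intro t ht
        simp only [List.mem_cons, List.mem_singleton, List.not_mem_nil, or_false] at ht
        rcases ht with rfl | rfl | rfl | rfl | rfl
        · exact hXX hx hv₃X
        · exact hXX hy hv₃X
        · exact hXX hz hv₃X
        · exact fun h => hv₃b₁ h.symm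
        · exact fun h => hv₃b₂ h.symm)
      simpa using this
    have l7 : IsLegalSeq G [x, y, z, b₁, b₂, b₃, b₄] := by
      have := legal_append_singleton l6 (by
        simp only [List.mem_cons, List.mem_singleton, List.not_mem_nil, or_false]
        push_neg
        exact ⟨hYX hb₄Y hx, hYX hb₄Y hy, hYX hb₄Y hz, hb41, hb42, hb43⟩) v₄ hab₄.symm (by
        intro t ht
        simp only [List.mem_cons, List.mem_singleton, List.not_mem_nil, or_false] at ht
        rcases ht with rfl | rfl | rfl | rfl | rfl | rfl
        · exact hXX hx hv₄X
        · exact hXX hy hv₄X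
        · exact hXX hz hv₄X
        · exact fun h => hv₄b₁ h.symm
        · exact fun h => hv₄b₂ h.symm
        · exact fun h => hv₄b₃ h.symm)
      simpa using this
    have := no7 hiso hg l7
    simp at this
  -- L2 : every legal triple on side X dominates side Y
  have hL2 : ∀ X Y : Set V, IsBipartitionOf G X Y → ∀ x y z w : V,
      x ∈ X → y ∈ X → z ∈ X → x ≠ y → G.Adj z w → ¬ G.Adj x w → ¬ G.Adj y w →
      ∀ b ∈ Y, G.Adj x b ∨ G.Adj y b ∨ G.Adj z b := by
    intro X Y hb x y z w hx hy hz hxy hzw hxw hyw b hbY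
    by_contra hc
    push_neg at hc
    obtain ⟨hxb, hyb, hzb⟩ := hc
    have hb' : IsBipartitionOf G Y X := ⟨fun v => (hb.1 v).symm, fun p q h => (hb.2 h).symm⟩
    have hXX : ∀ {p q : V}, p ∈ X → q ∈ X → ¬ G.Adj p q :=
      fun hp hq hadj => hexcl hb _ hq (hside hb hp hadj)
    have hYX : ∀ {p q : V}, q ∈ Y → p ∈ X → q ≠ p :=
      fun hq hp h => hexcl hb _ hp (h ▸ hq)
    obtain ⟨z₂, haz₂⟩ := hiso b
    have hz₂X : z₂ ∈ X := hside hb' hbY haz₂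
    have hwY : w ∈ Y := hside hb hz hzw
    obtain ⟨w', hw'⟩ := hiso x
    have hw'Y : w' ∈ Y := hside hb hx hw'
    have hww' : w ≠ w' := by rintro rfl; exact hxw hw'
    obtain ⟨p, q, r, hp, hq, hr, hpq, s, hrs, hps, hqs⟩ := hGL Y X hb' w w' hwY hw'Y hww'
    have hsX : s ∈ X := hside hb' hr hrs
    -- distinctness
    have hzx : z ≠ x := by rintro rfl; exact hxw hzw
    have hzy : z ≠ y := by rintro rfl; exact hyw hzw
    have hz₂x : z₂ ≠ x := by rintro rfl; exact hxb haz₂.symm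
    have hz₂y : z₂ ≠ y := by rintro rfl; exact hyb haz₂.symm
    have hz₂z : z₂ ≠ z := by rintro rfl; exact hzb haz₂.symm
    have hrp : r ≠ p := by rintro rfl; exact hps hrs
    have hrq : r ≠ q := by rintro rfl; exact hqs hrs
    -- build the legal 7-list [x,y,z,z₂,p,q,r]
    obtain ⟨wx, hwx⟩ := hiso x
    have l1 : IsLegalSeq G [x] := by
      have := legal_append_singleton (legal_nil G) (by simp) wx hwx (by simp)
      simpa using this
    obtain ⟨wy, hwy, hwyx⟩ := pair_step x y hxy
    have l2 : IsLegalSeq G [x, y] := by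
      have := legal_append_singleton l1 (by
        simp only [List.mem_singleton]
        exact fun h => hxy h.symm) wy hwy (by
        intro t ht
        simp only [List.mem_singleton] at ht
        subst ht; exact hwyx)
      simpa using this
    have l3 : IsLegalSeq G [x, y, z] := by
      have := legal_append_singleton l2 (by
        simp only [List.mem_cons, List.mem_singleton, List.not_mem_nil, or_false]
        push_neg
        exact ⟨hzx, hzy⟩) w hzw (by
        intro t ht
        simp only [List.mem_cons, List.mem_singleton, List.not_mem_nil, or_false] at ht
        rcases ht with rfl | rfl
        · exact hxw
        · exact hyw)
      simpa using this
    have l4 : IsLegalSeq G [x, y, z, z₂] := by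
      have := legal_append_singleton l3 (by
        simp only [List.mem_cons, List.mem_singleton, List.not_mem_nil, or_false]
        push_neg
        exact ⟨hz₂x, hz₂y, hz₂z⟩) b haz₂.symm (by
        intro t ht
        simp only [List.mem_cons, List.mem_singleton, List.not_mem_nil, or_false] at ht
        rcases ht with rfl | rfl | rfl
        · exact hxb
        · exact hyb
        · exact hzb)
      simpa using this
    obtain ⟨wp, hwp⟩ := hiso p
    have hwpX : wp ∈ X := hside hb' hp hwp
    have l5 : IsLegalSeq G [x, y, z, z₂, p] := by
      have := legal_append_singleton l4 (by
        simp only [List.mem_cons, List.mem_singleton, List.not_mem_nil, or_false]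
        push_neg
        exact ⟨hYX hp hx, hYX hp hy, hYX hp hz, hYX hp hz₂X⟩) wp hwp (by
        intro t ht
        simp only [List.mem_cons, List.mem_singleton, List.not_mem_nil, or_false] at ht
        rcases ht with rfl | rfl | rfl | rfl
        · exact hXX hx hwpX
        · exact hXX hy hwpX
        · exact hXX hz hwpX
        · exact hXX hz₂X hwpX)
      simpa using this
    obtain ⟨wq, hwq, hwqp⟩ := pair_step p q hpq
    have hwqX : wq ∈ X := hside hb' hq hwq
    have l6 : IsLegalSeq G [x, y, z, z₂, p, q] := by
      have := legal_append_singleton l5 (by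
        simp only [List.mem_cons, List.mem_singleton, List.not_mem_nil, or_false]
        push_neg
        exact ⟨hYX hq hx, hYX hq hy, hYX hq hz, hYX hq hz₂X, fun h => hpq h.symm⟩) wq hwq (by
        intro t ht
        simp only [List.mem_cons, List.mem_singleton, List.not_mem_nil, or_false] at ht
        rcases ht with rfl | rfl | rfl | rfl | rfl
        · exact hXX hx hwqX
        · exact hXX hy hwqX
        · exact hXX hz hwqX
        · exact hXX hz₂X hwqX
        · exact hwqp)
      simpa using this
    have l7 : IsLegalSeq G [x, y, z, z₂, p, q, r] := by
      have := legal_append_singleton l6 (by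
        simp only [List.mem_cons, List.mem_singleton, List.not_mem_nil, or_false]
        push_neg
        exact ⟨hYX hr hx, hYX hr hy, hYX hr hz, hYX hr hz₂X, hrp, hrq⟩) s hrs (by
        intro t ht
        simp only [List.mem_cons, List.mem_singleton, List.not_mem_nil, or_false] at ht
        rcases ht with rfl | rfl | rfl | rfl | rfl | rfl
        · exact hXX hx hsX
        · exact hXX hy hsX
        · exact hXX hz hsX
        · exact hXX hz₂X hsX
        · exact hps
        · exact hqs)
      simpa using this
    have := no7 hiso hg l7
    simp at this
  -- the union B₁ ∪ B₂ ∪ B'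
  have hunion : B₁ ∪ B₂ ∪ B' = G.neighborSet a₁ ∪ G.neighborSet a₂ := by
    rw [hB₁, hB₂, hB']
    ext t
    simp only [Set.mem_union, Set.mem_diff, Set.mem_inter_iff, SimpleGraph.mem_neighborSet]
    tauto
  have hA'spec : ∀ a ∈ A', a ∈ A ∧ a ≠ a₁ ∧ a ≠ a₂ ∧
      ∀ t : V, G.Adj a t → G.Adj a₁ t ∨ G.Adj a₂ t := by
    intro a ha
    rw [hA'] at ha
    obtain ⟨⟨haA, hanot⟩, hsub⟩ := ha
    simp only [Set.mem_insert_iff, Set.mem_singleton_iff, not_or] at hanot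
    refine ⟨haA, hanot.1, hanot.2, fun t hat => ?_⟩
    have h1 : t ∈ B₁ ∪ B₂ ∪ B' := hsub hat
    rw [hunion] at h1
    rcases h1 with h | h
    · exact Or.inl h
    · exact Or.inr h
  obtain ⟨c, hcB, hc1, hc2⟩ := hL1 A B hbip a₁ a₂ ha₁ ha₂ hne
  -- part 1
  have part1 : ∀ a ∈ A', (B' \ G.neighborSet a).Nonempty := by
    intro a haA'
    obtain ⟨haA, ha1, ha2, hsub⟩ := hA'spec a haA'
    by_contra hemp
    rw [Set.not_nonempty_iff_eq_empty] at hemp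
    have hB'sub : ∀ t, G.Adj a₁ t → G.Adj a₂ t → G.Adj a t := by
      intro t h1 h2
      by_contra h
      have : t ∈ B' \ G.neighborSet a := ⟨by rw [hB']; exact ⟨h1, h2⟩, h⟩
      rw [hemp] at this
      exact this
    have hB₂sub : ∀ t, G.Adj a₁ t → ¬ G.Adj a₂ t → G.Adj a t := by
      intro t ht1 ht2
      by_contra hta
      have hcov := hL2 A B hbip a₂ a a₁ t ha₂ haA ha₁ (Ne.symm ha2) ht1 ht2 hta
      rcases hcov c hcB with h | h | h
      · exact hc2 h
      · rcases hsub c h with h' | h'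
        · exact hc1 h'
        · exact hc2 h'
      · exact hc1 h
    have hsub1 : G.neighborSet a₁ ⊆ G.neighborSet a := by
      intro t ht
      rw [SimpleGraph.mem_neighborSet] at ht
      by_cases h2 : G.Adj a₂ t
      · exact hB'sub t ht h2
      · exact hB₂sub t ht h2
    have heq := Set.eq_of_subset_of_ncard_le hsub1 (by rw [hreg a, hreg a₁]) (Set.toFinite _)
    exact hftf a₁ a (Ne.symm ha1) heq
  -- part 2
  have part2 : ∀ a ∈ A', ∀ a' ∈ A', a ≠ a' →
      Disjoint (B' \ G.neighborSet a) (B' \ G.neighborSet a') := by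
    intro a ha a' ha' haa
    rw [Set.disjoint_left]
    intro b hb1 hb2
    obtain ⟨haA, _, _, hsuba⟩ := hA'spec a ha
    obtain ⟨ha'A, _, _, hsuba'⟩ := hA'spec a' ha'
    obtain ⟨hbB', hbna⟩ := hb1
    obtain ⟨_, hbna'⟩ := hb2
    rw [hB'] at hbB'
    have hba₁ : G.Adj a₁ b := hbB'.1
    rw [SimpleGraph.mem_neighborSet] at hbna hbna'
    have hcov := hL2 A B hbip a a' a₁ b haA ha'A ha₁ haa hba₁ hbna hbna'
    rcases hcov c hcB with h | h | h
    · rcases hsuba c h with h' | h'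
      · exact hc1 h'
      · exact hc2 h'
    · rcases hsuba' c h with h' | h'
      · exact hc1 h'
      · exact hc2 h'
    · exact hc1 h
  refine ⟨part1, part2, ?_⟩
  apply Set.Subset.antisymm
  · intro b hb
    simp only [Set.mem_iUnion] at hb
    obtain ⟨a, ha, hbmem⟩ := hb
    exact hbmem.1
  · -- part 3
    intro b hbB'
    by_contra hbn
    have hadjall : ∀ a ∈ A', G.Adj a b := by
      intro a ha
      by_contra h
      exact hbn (Set.mem_biUnion ha ⟨hbB', h⟩)
    have hbmem := hbB'
    rw [hB'] at hbmem
    have hba₁ : G.Adj a₁ b := hbmem.1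
    have hba₂ : G.Adj a₂ b := hbmem.2
    have hbB : b ∈ B := hside hbip ha₁ hba₁
    have hbc : b ≠ c := by rintro rfl; exact hc1 hba₁
    have hbipBA : IsBipartitionOf G B A :=
      ⟨fun v => (hbip.1 v).symm, fun p q h => (hbip.2 h).symm⟩
    obtain ⟨y, hyA, hyb, hyc⟩ := hL1 B A hbipBA b c hbB hcB hbc
    have hy1 : y ≠ a₁ := by rintro rfl; exact hyb hba₁.symm
    have hy2 : y ≠ a₂ := by rintro rfl; exact hyb hba₂.symm
    have hynA' : y ∉ A' := fun h => hyb ((hadjall y h).symm)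
    have hex : ∃ t, G.Adj y t ∧ ¬ G.Adj a₁ t ∧ ¬ G.Adj a₂ t := by
      by_contra hcon
      push_neg at hcon
      apply hynA'
      rw [hA']
      refine ⟨⟨hyA, ?_⟩, ?_⟩
      · simp only [Set.mem_insert_iff, Set.mem_singleton_iff, not_or]
        exact ⟨hy1, hy2⟩
      · intro t hyt
        rw [SimpleGraph.mem_neighborSet] at hyt
        rw [hunion]
        by_contra htn
        simp only [Set.mem_union, SimpleGraph.mem_neighborSet, not_or] at htn
        exact htn.2 (hcon t hyt htn.1)
    obtain ⟨t, hyt, ht1, ht2⟩ := hex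
    have hcov := hL2 A B hbip a₁ a₂ y t ha₁ ha₂ hyA hne hyt ht1 ht2
    rcases hcov c hcB with h | h | h
    · exact hc1 h
    · exact hc2 h
    · exact hyc h.symm
end

section
/- Let G be an (n−k)-regular bipartite false twin-free graph on 2n vertices with bipartition A ∪ B and γ_t(G) = γ_gr^t(G) = 6, let a_1 ≠ a_2 be vertices of A, and set B_2 = N(a_1)\N(a_2), B_1 = N(a_2)\N(a_1), B' = N(a_1) ∩ N(a_2), A' = {a ∈ A\{a_1,a_2} : N(a) ⊆ B_1 ∪ B_2 ∪ B'}, and A'' = A \ (A' ∪ {a_1, a_2}). Then for every a'' ∈ A'' and every a ∈ {a_1, a_2} ∪ A', the vertex a'' is adjacent to exactly k − 2 of the vertices in (B_1 ∪ B_2 ∪ B') \ N(a). -/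
section Aux
variable {V : Type*} {G : SimpleGraph V} {A B : Set V}

lemma aux_legal_singleton (v : V) : IsLegalSeq G [v] := by
  refine ⟨List.nodup_singleton v, fun i hi => ?_⟩
  have := i.2
  simp only [List.length_singleton] at this
  omega

lemma aux_legal_pair {x y : V} (hxy : x ≠ y)
    (hw : (G.neighborSet y \ G.neighborSet x).Nonempty) : IsLegalSeq G [x, y] := by
  obtain ⟨w, hwY, hwX⟩ := hw
  refine ⟨by simp [hxy], fun i hi => ?_⟩
  have hi2 : (i : ℕ) < 2 := i.2
  have hieq : i = ⟨1, by simp⟩ := Fin.ext (by show (i : ℕ) = 1; omega)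
  subst hieq
  refine ⟨w, hwY, fun j hj => ?_⟩
  have hj1 : (j : ℕ) < 1 := hj
  have hjeq : j = ⟨0, by simp⟩ := Fin.ext (by show (j : ℕ) = 0; omega)
  subst hjeq
  exact hwX

lemma aux_legal_append_single {l : List V} {u : V} (hl : IsLegalSeq G l) (hu : u ∉ l)
    (hw : ∃ w, G.Adj u w ∧ ∀ x ∈ l, ¬ G.Adj x w) : IsLegalSeq G (l ++ [u]) := by
  obtain ⟨w, hadj, hnot⟩ := hw
  constructor
  · refine List.nodup_append.2 ⟨hl.1, List.nodup_singleton u, ?_⟩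
    intro x hx y hy
    simp only [List.mem_singleton] at hy
    subst hy
    exact fun hxy => hu (hxy ▸ hx)
  · intro i hi
    by_cases hcase : (i : ℕ) < l.length
    · obtain ⟨w', hw1, hw2⟩ := hl.2 ⟨i, hcase⟩ hi
      refine ⟨w', ?_, ?_⟩
      · have h1 : (l ++ [u]).get i = l.get ⟨i, hcase⟩ := by
          simp only [List.get_eq_getElem]
          exact List.getElem_append_left hcase
        rwa [h1]
      · intro j hj
        have hj' : (j : ℕ) < l.length := lt_trans hj hcase
        have h1 : (l ++ [u]).get j = l.get ⟨j, hj'⟩ := by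
          simp only [List.get_eq_getElem]
          exact List.getElem_append_left hj'
        rw [h1]; exact hw2 ⟨j, hj'⟩ hj
    · have hi2 := i.2
      simp only [List.length_append, List.length_singleton] at hi2
      have hieq : (i : ℕ) = l.length := by omega
      refine ⟨w, ?_, ?_⟩
      · have h1 : (l ++ [u]).get i = u := by
          simp only [List.get_eq_getElem]
          rw [List.getElem_append_right (le_of_eq hieq.symm)]
          simp [hieq]
        rwa [h1]
      · intro j hj
        have hj' : (j : ℕ) < l.length := by omega
        have h1 : (l ++ [u]).get j = l.get ⟨j, hj'⟩ := by
          simp only [List.get_eq_getElem]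
          exact List.getElem_append_left hj'
        rw [h1]
        exact hnot _ (l.get_mem _)

lemma aux_extend_to_totalDomSeq [Fintype V] (hdeg : ∀ v : V, ∃ u, G.Adj v u) :
    ∀ (d : ℕ) (l : List V), IsLegalSeq G l → Fintype.card V ≤ l.length + d →
      ∃ m : List V, IsTotalDomSeq G m ∧ l.length ≤ m.length := by
  intro d
  induction d with
  | zero =>
    intro l hl hle
    by_cases htd : IsTotalDomSet G {v | v ∈ l}
    · exact ⟨l, ⟨hl, htd⟩, le_refl _⟩
    · exfalso
      simp only [IsTotalDomSet, not_forall] at htd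
      obtain ⟨v, hv⟩ := htd
      push_neg at hv
      obtain ⟨u, hu⟩ := hdeg v
      have hunl : u ∉ l := fun h => hv u h hu
      have : (l ++ [u]).Nodup :=
        (aux_legal_append_single hl hunl ⟨v, G.adj_symm hu, fun x hx hax => hv x hx (G.adj_symm hax)⟩).1
      have := this.length_le_card
      simp only [List.length_append, List.length_singleton] at this
      omega
  | succ d ih =>
    intro l hl hle
    by_cases htd : IsTotalDomSet G {v | v ∈ l}
    · exact ⟨l, ⟨hl, htd⟩, le_refl _⟩
    · simp only [IsTotalDomSet, not_forall] at htd
      obtain ⟨v, hv⟩ := htd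
      push_neg at hv
      obtain ⟨u, hu⟩ := hdeg v
      have hunl : u ∉ l := fun h => hv u h hu
      have hleg := aux_legal_append_single hl hunl
        ⟨v, G.adj_symm hu, fun x hx hax => hv x hx (G.adj_symm hax)⟩
      obtain ⟨m, hm, hlen⟩ := ih (l ++ [u]) hleg (by simp; omega)
      exact ⟨m, hm, by simp at hlen; omega⟩

lemma aux_legal_length_le_grundy [Fintype V] (hdeg : ∀ v : V, ∃ u, G.Adj v u)
    {l : List V} (hl : IsLegalSeq G l) : l.length ≤ grundyTotalDomNum G := by
  obtain ⟨m, hm, hlen⟩ := aux_extend_to_totalDomSeq hdeg (Fintype.card V) l hl (by omega)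
  have hmem : m.length ∈ {k : ℕ | ∃ l : List V, IsTotalDomSeq G l ∧ l.length = k} := ⟨m, hm, rfl⟩
  have hbdd : BddAbove {k : ℕ | ∃ l : List V, IsTotalDomSeq G l ∧ l.length = k} := by
    refine ⟨Fintype.card V, fun x hx => ?_⟩
    obtain ⟨l', hl', rfl⟩ := hx
    exact hl'.1.1.length_le_card
  exact le_trans hlen (le_csSup hbdd hmem)

lemma IsBipartitionOf.symm (h : IsBipartitionOf G A B) : IsBipartitionOf G B A :=
  ⟨fun v => (h.1 v).symm, fun u v huv => (h.2 huv).symm⟩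

lemma IsBipartitionOf.mem_right (h : IsBipartitionOf G A B) {x y : V} (hx : x ∈ A)
    (hxy : G.Adj x y) : y ∈ B := by
  rcases h.2 hxy with ⟨_, hy⟩ | ⟨hxB, _⟩
  · exact hy
  · rcases h.1 x with ⟨_, hnB⟩ | ⟨_, hnA⟩
    · exact absurd hxB hnB
    · exact absurd hx hnA

lemma IsBipartitionOf.not_adj (h : IsBipartitionOf G A B) {x y : V} (hx : x ∈ A)
    (hy : y ∈ A) : ¬ G.Adj x y := fun hxy => by
  have := h.mem_right hx hxy
  rcases h.1 y with ⟨_, hnB⟩ | ⟨hyB, hnA⟩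
  · exact hnB this
  · exact hnA hy

lemma aux_legal_append_bip (h : IsBipartitionOf G A B) (hdeg : ∀ v : V, ∃ u, G.Adj v u)
    {l₁ l₂ : List V} (h₁ : IsLegalSeq G l₁) (h₂ : IsLegalSeq G l₂)
    (hA : ∀ x ∈ l₁, x ∈ A) (hB : ∀ x ∈ l₂, x ∈ B) : IsLegalSeq G (l₁ ++ l₂) := by
  constructor
  · refine List.nodup_append.2 ⟨h₁.1, h₂.1, fun x hx y hy => ?_⟩
    rcases h.1 x with ⟨_, hnB⟩ | ⟨_, hnA⟩
    · exact fun hxy => hnB (hB x (by subst hxy; exact hy))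
    · exact fun _ => hnA (hA x hx)
  · intro i hi
    by_cases hcase : (i : ℕ) < l₁.length
    · obtain ⟨w, hw1, hw2⟩ := h₁.2 ⟨i, hcase⟩ hi
      refine ⟨w, ?_, ?_⟩
      · have e : (l₁ ++ l₂).get i = l₁.get ⟨i, hcase⟩ := by
          simp only [List.get_eq_getElem]; exact List.getElem_append_left hcase
        rwa [e]
      · intro j hj
        have hj' : (j : ℕ) < l₁.length := lt_trans hj hcase
        have e : (l₁ ++ l₂).get j = l₁.get ⟨j, hj'⟩ := by
          simp only [List.get_eq_getElem]; exact List.getElem_append_left hj'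
        rw [e]; exact hw2 ⟨j, hj'⟩ hj
    · push_neg at hcase
      have hi2 := i.2
      simp only [List.length_append] at hi2
      have hi2' : (i : ℕ) - l₁.length < l₂.length := by omega
      have egeti : (l₁ ++ l₂).get i = l₂.get ⟨(i : ℕ) - l₁.length, hi2'⟩ := by
        simp only [List.get_eq_getElem]
        exact List.getElem_append_right hcase
      have hyB : l₂.get ⟨(i : ℕ) - l₁.length, hi2'⟩ ∈ B := hB _ (l₂.get_mem _)
      have main : ∃ w, G.Adj ((l₁ ++ l₂).get i) w ∧
          ∀ j : Fin l₂.length, (j : ℕ) < (i : ℕ) - l₁.length → ¬ G.Adj (l₂.get j) w := by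
        by_cases h0 : (i : ℕ) - l₁.length = 0
        · obtain ⟨w, hw⟩ := hdeg ((l₁ ++ l₂).get i)
          exact ⟨w, hw, fun j hj => by omega⟩
        · obtain ⟨w, hw1, hw2⟩ := h₂.2 ⟨(i : ℕ) - l₁.length, hi2'⟩ (Nat.pos_of_ne_zero h0)
          rw [egeti]
          exact ⟨w, hw1, hw2⟩
      obtain ⟨w, hw1, hw2⟩ := main
      have hwA : w ∈ A := by
        have hmem : (l₁ ++ l₂).get i ∈ B := by rw [egeti]; exact hyB
        exact h.symm.mem_right hmem hw1
      refine ⟨w, hw1, fun j hj => ?_⟩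
      by_cases hjc : (j : ℕ) < l₁.length
      · have e : (l₁ ++ l₂).get j = l₁.get ⟨j, hjc⟩ := by
          simp only [List.get_eq_getElem]; exact List.getElem_append_left hjc
        rw [e]
        exact h.not_adj (hA _ (l₁.get_mem _)) hwA
      · push_neg at hjc
        have hj2' : (j : ℕ) - l₁.length < l₂.length := by omega
        have e : (l₁ ++ l₂).get j = l₂.get ⟨(j : ℕ) - l₁.length, hj2'⟩ := by
          simp only [List.get_eq_getElem]; exact List.getElem_append_right hjc
        rw [e]
        exact hw2 ⟨(j : ℕ) - l₁.length, hj2'⟩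
          (by show (j : ℕ) - l₁.length < (i : ℕ) - l₁.length; omega)

lemma aux_card_sides [Fintype V] (h : IsBipartitionOf G A B) {n k : ℕ}
    (hreg : ∀ v : V, (G.neighborSet v).ncard = n - k) (hpos : 0 < n - k)
    (hcard : Fintype.card V = 2 * n) : A.ncard = n ∧ B.ncard = n := by
  classical
  set Af := (Set.toFinite A).toFinset with hAf
  set Bf := (Set.toFinite B).toFinset with hBf
  have memA : ∀ x, x ∈ Af ↔ x ∈ A := fun x => Set.Finite.mem_toFinset _
  have memB : ∀ x, x ∈ Bf ↔ x ∈ B := fun x => Set.Finite.mem_toFinset _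
  have hdeg : ∀ v : V, (G.neighborFinset v).card = n - k := by
    intro v
    rw [SimpleGraph.neighborFinset_def, ← Set.ncard_eq_toFinset_card']
    exact hreg v
  have hfa : ∀ a ∈ Af, (Bf.filter (fun b => G.Adj a b)).card = n - k := by
    intro a haf
    have : Bf.filter (fun b => G.Adj a b) = G.neighborFinset a := by
      ext b
      simp only [Finset.mem_filter, SimpleGraph.mem_neighborFinset, memB]
      exact ⟨fun hb => hb.2, fun hb => ⟨h.mem_right ((memA a).1 haf) hb, hb⟩⟩
    rw [this]; exact hdeg a
  have hfb : ∀ b ∈ Bf, (Af.filter (fun a => G.Adj a b)).card = n - k := by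
    intro b hbf
    have : Af.filter (fun a => G.Adj a b) = G.neighborFinset b := by
      ext a
      simp only [Finset.mem_filter, SimpleGraph.mem_neighborFinset, memA]
      constructor
      · exact fun ha => ha.2.symm
      · intro ha
        exact ⟨h.symm.mem_right ((memB b).1 hbf) ha, ha.symm⟩
    rw [this]; exact hdeg b
  have hsum : ∑ a ∈ Af, (Bf.filter (fun b => G.Adj a b)).card
      = ∑ b ∈ Bf, (Af.filter (fun a => G.Adj a b)).card := by
    simp only [Finset.card_filter]
    rw [Finset.sum_comm]
  have h1 : Af.card * (n - k) = Bf.card * (n - k) := by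
    calc Af.card * (n - k) = ∑ _a ∈ Af, (n - k) := by rw [Finset.sum_const, smul_eq_mul]
    _ = ∑ a ∈ Af, (Bf.filter (fun b => G.Adj a b)).card := (Finset.sum_congr rfl hfa).symm
    _ = ∑ b ∈ Bf, (Af.filter (fun a => G.Adj a b)).card := hsum
    _ = ∑ _b ∈ Bf, (n - k) := Finset.sum_congr rfl hfb
    _ = Bf.card * (n - k) := by rw [Finset.sum_const, smul_eq_mul]
  have hABcard : Af.card = Bf.card := Nat.eq_of_mul_eq_mul_right hpos h1
  have hunion : Af.card + Bf.card = 2 * n := by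
    rw [← hcard, ← Finset.card_univ]
    rw [← Finset.card_union_of_disjoint (s := Af) (t := Bf) ?hd]
    · congr 1
      apply Finset.eq_univ_of_forall
      intro v
      rcases h.1 v with ⟨hv, _⟩ | ⟨hv, _⟩
      · exact Finset.mem_union.2 (Or.inl ((memA v).2 hv))
      · exact Finset.mem_union.2 (Or.inr ((memB v).2 hv))
    case hd =>
      rw [Finset.disjoint_left]
      intro x hx hx'
      rcases h.1 x with ⟨_, hnB⟩ | ⟨_, hnA⟩
      · exact hnB ((memB x).1 hx')
      · exact hnA ((memA x).1 hx)
  have hA2 : A.ncard = Af.card := by rw [hAf]; exact Set.ncard_eq_toFinset_card A (Set.toFinite A)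
  have hB2 : B.ncard = Bf.card := by rw [hBf]; exact Set.ncard_eq_toFinset_card B (Set.toFinite B)
  exact ⟨by omega, by omega⟩

lemma aux_elim_pairs [Fintype V] (h : IsBipartitionOf G A B) (hftf : FalseTwinFree G) {n k : ℕ}
    (hreg : ∀ v : V, (G.neighborSet v).ncard = n - k) (hpos : 0 < n - k)
    (hcardA : A.ncard = n) (hcardB : B.ncard = n)
    {x y : V} (hx : x ∈ A) (hy : y ∈ A) (hxy : x ≠ y)
    (hpair : ∀ u v : V, u ∈ A → v ∈ A → u ≠ v → B ⊆ G.neighborSet u ∪ G.neighborSet v) :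
    ∃ S : Set V, S ⊆ B ∧ (∀ a ∈ A, ∃ s ∈ S, G.Adj a s) ∧ S.ncard ≤ 2 := by
  have hklt : k < n := by omega
  have hNB : ∀ a ∈ A, G.neighborSet a ⊆ B := fun a ha w hw => h.mem_right ha hw
  have hNA : ∀ b ∈ B, G.neighborSet b ⊆ A := fun b hb w hw => h.symm.mem_right hb hw
  have hn2 : 2 ≤ n := by
    have : 1 < A.ncard := (Set.one_lt_ncard (Set.toFinite A)).2 ⟨x, hx, y, hy, hxy⟩
    omega
  have hMA : ∀ b ∈ B, (A \ G.neighborSet b).ncard = k := by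
    intro b hb
    rw [Set.ncard_diff (hNA b hb) (Set.toFinite _), hreg, hcardA]
    omega
  obtain ⟨b₀, hb₀⟩ : ∃ b, b ∈ B := by
    rcases Set.nonempty_of_ncard_ne_zero (s := B) (by omega) with ⟨b, hb⟩
    exact ⟨b, hb⟩
  have hk1 : k ≤ 1 := by
    rw [← hMA b₀ hb₀]
    rw [Set.ncard_le_one (Set.toFinite _)]
    intro u hu v hv
    by_contra huv
    rcases hpair u v hu.1 hv.1 huv hb₀ with hc | hc
    · exact hu.2 (G.adj_symm hc)
    · exact hv.2 (G.adj_symm hc)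
  interval_cases k
  · exfalso
    have hfull : ∀ a ∈ A, G.neighborSet a = B := by
      intro a ha
      refine Set.eq_of_subset_of_ncard_le (hNB a ha) ?_ (Set.toFinite _)
      rw [hreg, hcardB]
      omega
    exact hftf x y hxy (by rw [hfull x hx, hfull y hy])
  · have hB2 : ∃ b ∈ B, ∃ b' ∈ B, b ≠ b' := by
      have : 1 < B.ncard := by omega
      rcases (Set.one_lt_ncard (Set.toFinite B)).1 this with ⟨b, hb, b', hb', hbb'⟩
      exact ⟨b, hb, b', hb', hbb'⟩
    obtain ⟨b, hb, b', hb', hbb'⟩ := hB2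
    refine ⟨{b, b'}, ?_, ?_, ?_⟩
    · intro z hz; rcases hz with rfl | rfl; exact hb; exact hb'
    · intro a ha
      have hMa : (B \ G.neighborSet a).ncard = 1 := by
        rw [Set.ncard_diff (hNB a ha) (Set.toFinite _), hreg, hcardB]
        omega
      by_contra hcon
      push_neg at hcon
      have h1 : b ∈ B \ G.neighborSet a := ⟨hb, fun hmem => hcon b (by simp) hmem⟩
      have h2 : b' ∈ B \ G.neighborSet a := ⟨hb', fun hmem => hcon b' (by simp) hmem⟩
      exact hbb' ((Set.ncard_le_one (Set.toFinite _)).1 (le_of_eq hMa) b h1 b' h2)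
    · rw [Set.ncard_pair hbb']

end Aux

/-- Every vertex of `A''` is adjacent to exactly `k − 2` of the
non-neighbors in `B₁ ∪ B₂ ∪ B'` of each vertex of `{a₁, a₂} ∪ A'`. -/
theorem claim_neighbors_A''
    {V : Type*} [Fintype V] (G : SimpleGraph V) (n k : ℕ) (A B : Set V)
    (hbip : IsBipartitionOf G A B) (hftf : FalseTwinFree G)
    (hcard : Fintype.card V = 2 * n)
    (hreg : ∀ v : V, (G.neighborSet v).ncard = n - k)
    (ht : totalDomNum G = 6) (hg : grundyTotalDomNum G = 6)
    (a₁ a₂ : V) (ha₁ : a₁ ∈ A) (ha₂ : a₂ ∈ A) (hne : a₁ ≠ a₂)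
    (B₁ B₂ B' A' : Set V)
    (hB₂ : B₂ = G.neighborSet a₁ \ G.neighborSet a₂)
    (hB₁ : B₁ = G.neighborSet a₂ \ G.neighborSet a₁)
    (hB' : B' = G.neighborSet a₁ ∩ G.neighborSet a₂)
    (hA' : A' = {a ∈ A \ {a₁, a₂} | G.neighborSet a ⊆ B₁ ∪ B₂ ∪ B'})
    (A'' : Set V) (hA'' : A'' = A \ (A' ∪ {a₁, a₂}))
    (a'' : V) (ha'' : a'' ∈ A'')
    (a : V) (ha : a ∈ ({a₁, a₂} : Set V) ∪ A') :
    (((B₁ ∪ B₂ ∪ B') \ G.neighborSet a) ∩ G.neighborSet a'').ncard = k - 2 := by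
  classical
  have hNB : ∀ x ∈ A, G.neighborSet x ⊆ B := fun x hx w hw => hbip.mem_right hx hw
  have hNA : ∀ b ∈ B, G.neighborSet b ⊆ A := fun b hb w hw => hbip.symm.mem_right hb hw
  -- positivity of degrees
  have hpos : 0 < n - k := by
    by_contra hp
    push_neg at hp
    have h0 : (G.neighborSet a₁).ncard = 0 := by rw [hreg]; omega
    have hempty : G.neighborSet a₁ = ∅ := by
      have := Set.toFinite (G.neighborSet a₁)
      rwa [Set.ncard_eq_zero (Set.toFinite _)] at h0
    have hzero : totalDomNum G = 0 := by
      unfold totalDomNum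
      convert Nat.sInf_empty
      rw [Set.eq_empty_iff_forall_notMem]
      rintro m ⟨S, hS, _⟩
      obtain ⟨u, _, hadj⟩ := hS a₁
      have : u ∈ G.neighborSet a₁ := hadj
      rw [hempty] at this
      exact this
    omega
  have hdeg : ∀ v : V, ∃ u, G.Adj v u := by
    intro v
    have hne0 : (G.neighborSet v).ncard ≠ 0 := by rw [hreg]; omega
    obtain ⟨u, hu⟩ := Set.nonempty_of_ncard_ne_zero hne0
    exact ⟨u, hu⟩
  obtain ⟨hcardA, hcardB⟩ := aux_card_sides hbip hreg hpos hcard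
  have hklt : k < n := by omega
  -- distinct vertices have a fresh neighbor
  have hdiffne : ∀ x y : V, x ≠ y → (G.neighborSet y \ G.neighborSet x).Nonempty := by
    intro x y hxy
    rw [Set.diff_nonempty]
    intro hsub
    exact hftf y x (Ne.symm hxy)
      (Set.eq_of_subset_of_ncard_le hsub (by rw [hreg, hreg]) (Set.toFinite _))
  -- the side sequence/cover quantities
  set SA : Set ℕ := {m | ∃ l : List V, IsLegalSeq G l ∧ (∀ x ∈ l, x ∈ A) ∧ l.length = m}
    with hSAdef
  set SB : Set ℕ := {m | ∃ l : List V, IsLegalSeq G l ∧ (∀ x ∈ l, x ∈ B) ∧ l.length = m}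
    with hSBdef
  set CA : Set ℕ := {m | ∃ S : Set V, S ⊆ A ∧ (∀ b ∈ B, ∃ s ∈ S, G.Adj b s) ∧ S.ncard = m}
    with hCAdef
  set CB : Set ℕ := {m | ∃ S : Set V, S ⊆ B ∧ (∀ x ∈ A, ∃ s ∈ S, G.Adj x s) ∧ S.ncard = m}
    with hCBdef
  have hSAne : SA.Nonempty := ⟨1, [a₁], aux_legal_singleton a₁, by simpa using ha₁, rfl⟩
  have hn2 : 2 ≤ n := by
    have : 1 < A.ncard := (Set.one_lt_ncard (Set.toFinite A)).2 ⟨a₁, ha₁, a₂, ha₂, hne⟩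
    omega
  obtain ⟨bb, hbb, bb', hbb', hbbne⟩ :=
    (Set.one_lt_ncard (Set.toFinite B)).1 (by omega : 1 < B.ncard)
  have hSBne : SB.Nonempty := ⟨1, [bb], aux_legal_singleton bb, by simpa using hbb, rfl⟩
  have hbddA : BddAbove SA := by
    refine ⟨Fintype.card V, fun m hm => ?_⟩
    obtain ⟨l, hl, _, rfl⟩ := hm
    exact hl.1.length_le_card
  have hbddB : BddAbove SB := by
    refine ⟨Fintype.card V, fun m hm => ?_⟩
    obtain ⟨l, hl, _, rfl⟩ := hm
    exact hl.1.length_le_card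
  set gA := sSup SA with hgAdef
  set gB := sSup SB with hgBdef
  set cA := sInf CA with hcAdef
  set cB := sInf CB with hcBdef
  have hCAne : CA.Nonempty := by
    refine ⟨A.ncard, A, subset_rfl, fun b hb => ?_, rfl⟩
    obtain ⟨u, hu⟩ := hdeg b
    exact ⟨u, hNA b hb hu, hu⟩
  have hCBne : CB.Nonempty := by
    refine ⟨B.ncard, B, subset_rfl, fun x hx => ?_, rfl⟩
    obtain ⟨u, hu⟩ := hdeg x
    exact ⟨u, hNB x hx hu, hu⟩
  -- a longest legal A-sequence covers B, hence cA ≤ gA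
  have hcAgA : cA ≤ gA := by
    obtain ⟨lA, hlA, hlAA, hlAlen⟩ := Nat.sSup_mem hSAne hbddA
    have hcov : ∀ b ∈ B, ∃ s ∈ {v | v ∈ lA}, G.Adj b s := by
      intro b hb
      by_contra hc
      push_neg at hc
      obtain ⟨u, hu⟩ := hdeg b
      have huA : u ∈ A := hNA b hb hu
      have hunl : u ∉ lA := fun hmem => hc u hmem hu
      have hleg' := aux_legal_append_single hlA hunl
        ⟨b, G.adj_symm hu, fun x hx hax => hc x hx (G.adj_symm hax)⟩
      have hmem : lA.length + 1 ∈ SA := by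
        refine ⟨lA ++ [u], hleg', ?_, by simp⟩
        intro x hx
        rcases List.mem_append.1 hx with hx | hx
        · exact hlAA x hx
        · simp only [List.mem_singleton] at hx; exact hx ▸ huA
      have := le_csSup hbddA hmem
      omega
    apply Nat.sInf_le
    refine ⟨{v | v ∈ lA}, fun x hx => hlAA x hx, hcov, ?_⟩
    rw [← List.coe_toFinset, Set.ncard_coe_finset, List.toFinset_card_of_nodup hlA.1, hlAlen]
  have hcBgB : cB ≤ gB := by
    obtain ⟨lB, hlB, hlBB, hlBlen⟩ := Nat.sSup_mem hSBne hbddB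
    have hcov : ∀ x ∈ A, ∃ s ∈ {v | v ∈ lB}, G.Adj x s := by
      intro x hx
      by_contra hc
      push_neg at hc
      obtain ⟨u, hu⟩ := hdeg x
      have huB : u ∈ B := hNB x hx hu
      have hunl : u ∉ lB := fun hmem => hc u hmem hu
      have hleg' := aux_legal_append_single hlB hunl
        ⟨x, G.adj_symm hu, fun z hz haz => hc z hz (G.adj_symm haz)⟩
      have hmem : lB.length + 1 ∈ SB := by
        refine ⟨lB ++ [u], hleg', ?_, by simp⟩
        intro z hz
        rcases List.mem_append.1 hz with hz | hz
        · exact hlBB z hz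
        · simp only [List.mem_singleton] at hz; exact hz ▸ huB
      have := le_csSup hbddB hmem
      omega
    apply Nat.sInf_le
    refine ⟨{v | v ∈ lB}, fun x hx => hlBB x hx, hcov, ?_⟩
    rw [← List.coe_toFinset, Set.ncard_coe_finset, List.toFinset_card_of_nodup hlB.1, hlBlen]
  -- gA + gB ≤ 6
  have hgsum : gA + gB ≤ 6 := by
    obtain ⟨lA, hlA, hlAA, hlAlen⟩ := Nat.sSup_mem hSAne hbddA
    obtain ⟨lB, hlB, hlBB, hlBlen⟩ := Nat.sSup_mem hSBne hbddB
    have hcat := aux_legal_append_bip hbip hdeg hlA hlB hlAA hlBB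
    have := aux_legal_length_le_grundy hdeg hcat
    rw [hg] at this
    simp only [List.length_append] at this
    omega
  -- cA + cB = 6
  have hcsum : cA + cB = 6 := by
    have hge : 6 ≤ cA + cB := by
      obtain ⟨SAs, hSAsub, hSAcov, hSAcard⟩ := Nat.sInf_mem hCAne
      obtain ⟨SBs, hSBsub, hSBcov, hSBcard⟩ := Nat.sInf_mem hCBne
      have htot : IsTotalDomSet G (SAs ∪ SBs) := by
        intro v
        rcases hbip.1 v with ⟨hvA, _⟩ | ⟨hvB, _⟩
        · obtain ⟨s, hs, hadj⟩ := hSBcov v hvA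
          exact ⟨s, Or.inr hs, hadj⟩
        · obtain ⟨s, hs, hadj⟩ := hSAcov v hvB
          exact ⟨s, Or.inl hs, hadj⟩
      have hmem : (SAs ∪ SBs).ncard ∈ {m : ℕ | ∃ S : Set V, IsTotalDomSet G S ∧ S.ncard = m} :=
        ⟨SAs ∪ SBs, htot, rfl⟩
      have h1 : totalDomNum G ≤ (SAs ∪ SBs).ncard := Nat.sInf_le hmem
      have h2 := Set.ncard_union_le SAs SBs
      rw [ht] at h1
      omega
    have hle : cA + cB ≤ 6 := by
      have hTDne : {m : ℕ | ∃ S : Set V, IsTotalDomSet G S ∧ S.ncard = m}.Nonempty := by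
        refine ⟨(Set.univ : Set V).ncard, Set.univ, fun v => ?_, rfl⟩
        obtain ⟨u, hu⟩ := hdeg v
        exact ⟨u, Set.mem_univ u, hu⟩
      obtain ⟨S6, hS6, hS6card⟩ := Nat.sInf_mem hTDne
      have hS6c : S6.ncard = 6 := by rw [hS6card]; exact ht
      have h1 : cA ≤ (S6 ∩ A).ncard := by
        apply Nat.sInf_le
        refine ⟨S6 ∩ A, Set.inter_subset_right, fun b hb => ?_, rfl⟩
        obtain ⟨u, hu, hadj⟩ := hS6 b
        exact ⟨u, ⟨hu, hNA b hb hadj⟩, hadj⟩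
      have h2 : cB ≤ (S6 ∩ B).ncard := by
        apply Nat.sInf_le
        refine ⟨S6 ∩ B, Set.inter_subset_right, fun x hx => ?_, rfl⟩
        obtain ⟨u, hu, hadj⟩ := hS6 x
        exact ⟨u, ⟨hu, hNB x hx hadj⟩, hadj⟩
      have hsplit : (S6 ∩ A).ncard + (S6 ∩ B).ncard = 6 := by
        rw [← Set.ncard_union_eq ?hdisj (Set.toFinite _) (Set.toFinite _)]
        · have hequ : S6 ∩ A ∪ S6 ∩ B = S6 := by
            rw [← Set.inter_union_distrib_left]
            apply Set.inter_eq_self_of_subset_left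
            intro v _
            rcases hbip.1 v with ⟨hv, _⟩ | ⟨hv, _⟩
            · exact Or.inl hv
            · exact Or.inr hv
          rw [hequ, hS6c]
        case hdisj =>
          rw [Set.disjoint_left]
          rintro z ⟨_, hzA⟩ ⟨_, hzB⟩
          rcases hbip.1 z with ⟨_, hnB⟩ | ⟨_, hnA⟩
          · exact hnB hzB
          · exact hnA hzA
      omega
    omega
  -- lower bounds gA, gB ≥ 2
  have hgA2 : 2 ≤ gA := by
    refine le_csSup hbddA ⟨[a₁, a₂], aux_legal_pair hne (hdiffne a₁ a₂ hne), ?_, rfl⟩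
    intro x hx
    simp only [List.mem_cons, List.mem_singleton, List.not_mem_nil, or_false] at hx
    rcases hx with rfl | rfl
    · exact ha₁
    · exact ha₂
  have hgB2 : 2 ≤ gB := by
    refine le_csSup hbddB ⟨[bb, bb'], aux_legal_pair hbbne (hdiffne bb bb' hbbne), ?_, rfl⟩
    intro x hx
    simp only [List.mem_cons, List.mem_singleton, List.not_mem_nil, or_false] at hx
    rcases hx with rfl | rfl
    · exact hbb
    · exact hbb'
  -- rule out gA = 2 and gB = 2
  have hnogA2 : gA ≠ 2 := by
    intro hgA
    have hpair : ∀ u v : V, u ∈ A → v ∈ A → u ≠ v → B ⊆ G.neighborSet u ∪ G.neighborSet v := by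
      intro u v hu hv huv b hb
      by_contra hbc
      rw [Set.mem_union] at hbc
      push_neg at hbc
      obtain ⟨z, hz⟩ := hdeg b
      have hzA : z ∈ A := hNA b hb hz
      have hzu : z ≠ u := fun h => hbc.1 (h ▸ (G.adj_symm hz))
      have hzv : z ≠ v := fun h => hbc.2 (h ▸ (G.adj_symm hz))
      have hleg := aux_legal_append_single (G := G) (aux_legal_pair huv (hdiffne u v huv))
        (by simp [hzu, hzv])
        ⟨b, G.adj_symm hz, by
          intro x hx
          simp only [List.mem_cons, List.mem_singleton, List.not_mem_nil, or_false] at hx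
          rcases hx with rfl | rfl
          · exact fun had => hbc.1 had
          · exact fun had => hbc.2 had⟩
      have hmem : 3 ∈ SA := by
        refine ⟨[u, v] ++ [z], hleg, ?_, by simp⟩
        intro x hx
        simp only [List.mem_append, List.mem_cons, List.mem_singleton, List.not_mem_nil,
          or_false] at hx
        rcases hx with (rfl | rfl) | rfl
        · exact hu
        · exact hv
        · exact hzA
      have := le_csSup hbddA hmem
      omega
    obtain ⟨S, hSsub, hScov, hScard⟩ :=
      aux_elim_pairs hbip hftf hreg hpos hcardA hcardB ha₁ ha₂ hne hpair
    have : cB ≤ S.ncard := Nat.sInf_le ⟨S, hSsub, hScov, rfl⟩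
    omega
  have hnogB2 : gB ≠ 2 := by
    intro hgB
    have hpair : ∀ u v : V, u ∈ B → v ∈ B → u ≠ v → A ⊆ G.neighborSet u ∪ G.neighborSet v := by
      intro u v hu hv huv x hx
      by_contra hbc
      rw [Set.mem_union] at hbc
      push_neg at hbc
      obtain ⟨z, hz⟩ := hdeg x
      have hzB : z ∈ B := hNB x hx hz
      have hzu : z ≠ u := fun h => hbc.1 (h ▸ (G.adj_symm hz))
      have hzv : z ≠ v := fun h => hbc.2 (h ▸ (G.adj_symm hz))
      have hleg := aux_legal_append_single (G := G) (aux_legal_pair huv (hdiffne u v huv))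
        (by simp [hzu, hzv])
        ⟨x, G.adj_symm hz, by
          intro y hy
          simp only [List.mem_cons, List.mem_singleton, List.not_mem_nil, or_false] at hy
          rcases hy with rfl | rfl
          · exact fun had => hbc.1 had
          · exact fun had => hbc.2 had⟩
      have hmem : 3 ∈ SB := by
        refine ⟨[u, v] ++ [z], hleg, ?_, by simp⟩
        intro y hy
        simp only [List.mem_append, List.mem_cons, List.mem_singleton, List.not_mem_nil,
          or_false] at hy
        rcases hy with (rfl | rfl) | rfl
        · exact hu
        · exact hv
        · exact hzB
      have := le_csSup hbddB hmem
      omega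
    obtain ⟨S, hSsub, hScov, hScard⟩ :=
      aux_elim_pairs hbip.symm hftf hreg hpos hcardB hcardA hbb hbb' hbbne hpair
    have : cA ≤ S.ncard := Nat.sInf_le ⟨S, hSsub, hScov, rfl⟩
    omega
  have hgA3 : gA = 3 := by omega
  have hcA3 : cA = 3 := by omega
  -- every legal triple in A covers B
  have keyT : ∀ u v z : V, u ∈ A → v ∈ A → z ∈ A → u ≠ v → z ≠ u → z ≠ v →
      (∃ w, G.Adj z w ∧ ¬ G.Adj u w ∧ ¬ G.Adj v w) →
      B ⊆ G.neighborSet u ∪ G.neighborSet v ∪ G.neighborSet z := by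
    intro u v z hu hv hz huv hzu hzv ⟨w, hw1, hw2, hw3⟩ b hb
    by_contra hbc
    simp only [Set.mem_union] at hbc
    push_neg at hbc
    obtain ⟨⟨hb1, hb2⟩, hb3⟩ := hbc
    have hleg3 := aux_legal_append_single (G := G) (aux_legal_pair huv (hdiffne u v huv))
      (by simp [hzu, hzv])
      ⟨w, hw1, by
        intro x hx
        simp only [List.mem_cons, List.mem_singleton, List.not_mem_nil, or_false] at hx
        rcases hx with rfl | rfl
        · exact hw2
        · exact hw3⟩
    obtain ⟨z', hz'⟩ := hdeg b
    have hz'A : z' ∈ A := hNA b hb hz'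
    have hz'new : z' ∉ [u, v] ++ [z] := by
      intro hmem
      have hadj : G.Adj z' b := G.adj_symm hz'
      simp only [List.mem_append, List.mem_cons, List.mem_singleton, List.not_mem_nil,
        or_false] at hmem
      rcases hmem with (rfl | rfl) | rfl
      · exact hb1 hadj
      · exact hb2 hadj
      · exact hb3 hadj
    have hleg4 := aux_legal_append_single hleg3 hz'new
      ⟨b, G.adj_symm hz', by
        intro x hx
        simp only [List.mem_append, List.mem_cons, List.mem_singleton, List.not_mem_nil,
          or_false] at hx
        rcases hx with (rfl | rfl) | rfl
        · exact fun had => hb1 had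
        · exact fun had => hb2 had
        · exact fun had => hb3 had⟩
    have hmem : 4 ∈ SA := by
      refine ⟨([u, v] ++ [z]) ++ [z'], hleg4, ?_, by simp⟩
      intro x hx
      simp only [List.mem_append, List.mem_cons, List.mem_singleton, List.not_mem_nil,
        or_false] at hx
      rcases hx with ((rfl | rfl) | rfl) | rfl
      · exact hu
      · exact hv
      · exact hz
      · exact hz'A
    have := le_csSup hbddA hmem
    omega
  -- any two distinct vertices of A have a common non-neighbor in B
  have keyPair : ∀ u v : V, u ∈ A → v ∈ A → u ≠ v →
      ∃ b, b ∈ B ∧ ¬ G.Adj u b ∧ ¬ G.Adj v b := by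
    intro u v hu hv huv
    by_contra hc
    push_neg at hc
    have hcov : ∀ b ∈ B, ∃ s ∈ ({u, v} : Set V), G.Adj b s := by
      intro b hb
      by_cases hub : G.Adj u b
      · exact ⟨u, by simp, G.adj_symm hub⟩
      · exact ⟨v, by simp, G.adj_symm (hc b hb hub)⟩
    have h1 : cA ≤ ({u, v} : Set V).ncard := by
      apply Nat.sInf_le
      refine ⟨{u, v}, ?_, hcov, rfl⟩
      intro z hz
      rcases hz with rfl | rfl
      · exact hu
      · exact hv
    rw [Set.ncard_pair huv] at h1
    omega
  -- uniqueness of the common non-neighbor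
  have keyHalf : ∀ u v b c : V, u ∈ A → v ∈ A → u ≠ v →
      b ∈ B → ¬ G.Adj u b → ¬ G.Adj v b →
      c ∈ B → ¬ G.Adj u c → ¬ G.Adj v c → b ≠ c →
      ∀ w, G.Adj b w → G.Adj c w := by
    intro u v b c hu hv huv hb hub hvb hc huc hvc hbc w hw
    have hwA : w ∈ A := hNA b hb hw
    have hwu : w ≠ u := fun h => hub (h ▸ G.adj_symm hw)
    have hwv : w ≠ v := fun h => hvb (h ▸ G.adj_symm hw)
    have hcovT := keyT u v w hu hv hwA huv hwu hwv
      ⟨b, G.adj_symm hw, fun had => hub had, fun had => hvb had⟩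
    rcases hcovT hc with h | h
    · rcases h with h | h
      · exact absurd h huc
      · exact absurd h hvc
    · exact G.adj_symm h
  have keyUnique : ∀ u v b c : V, u ∈ A → v ∈ A → u ≠ v →
      b ∈ B → ¬ G.Adj u b → ¬ G.Adj v b →
      c ∈ B → ¬ G.Adj u c → ¬ G.Adj v c → b = c := by
    intro u v b c hu hv huv hb hub hvb hc huc hvc
    by_contra hbc
    apply hftf b c hbc
    ext w
    constructor
    · exact fun hw => keyHalf u v b c hu hv huv hb hub hvb hc huc hvc hbc w hw
    · exact fun hw => keyHalf u v c b hu hv huv hc huc hvc hb hub hvb (Ne.symm hbc) w hw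
  -- the unique common non-neighbor of a₁ and a₂
  obtain ⟨b₀, hb₀B, hb₀1, hb₀2⟩ := keyPair a₁ a₂ ha₁ ha₂ hne
  -- B₁ ∪ B₂ ∪ B' = B \ {b₀}
  have hUN : B₁ ∪ B₂ ∪ B' = G.neighborSet a₁ ∪ G.neighborSet a₂ := by
    rw [hB₁, hB₂, hB']
    ext u
    simp only [Set.mem_union, Set.mem_diff, Set.mem_inter_iff]
    tauto
  have hUeq : B₁ ∪ B₂ ∪ B' = B \ {b₀} := by
    rw [hUN]
    ext u
    simp only [Set.mem_union, Set.mem_diff, Set.mem_singleton_iff]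
    constructor
    · rintro (hu | hu)
      · exact ⟨hNB a₁ ha₁ hu, fun h => hb₀1 (h ▸ hu)⟩
      · exact ⟨hNB a₂ ha₂ hu, fun h => hb₀2 (h ▸ hu)⟩
    · rintro ⟨huB, hub₀⟩
      by_contra hcon
      push_neg at hcon
      exact hub₀ (keyUnique a₁ a₂ u b₀ ha₁ ha₂ hne huB hcon.1 hcon.2 hb₀B hb₀1 hb₀2)
  -- facts about a''
  rw [hA''] at ha''
  obtain ⟨ha''A, ha''n⟩ := ha''
  simp only [Set.mem_union, Set.mem_insert_iff, Set.mem_singleton_iff] at ha''n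
  push_neg at ha''n
  obtain ⟨ha''A', ha''1, ha''2⟩ := ha''n
  have hb₀a'' : G.Adj a'' b₀ := by
    have hnot : ¬ G.neighborSet a'' ⊆ B₁ ∪ B₂ ∪ B' := by
      intro hsub
      exact ha''A' (by
        rw [hA']
        exact ⟨⟨ha''A, by simp [ha''1, ha''2]⟩, hsub⟩)
    rw [Set.not_subset] at hnot
    obtain ⟨w, hw1, hw2⟩ := hnot
    rw [hUeq] at hw2
    have hwB : w ∈ B := hNB a'' ha''A hw1
    have hwb₀ : w = b₀ := by
      by_contra hne'
      exact hw2 ⟨hwB, hne'⟩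
    exact hwb₀ ▸ hw1
  -- facts about a
  have hafacts : a ∈ A ∧ a ≠ a'' ∧ ¬ G.Adj a b₀ := by
    rcases ha with h | h
    · rcases h with rfl | rfl
      · exact ⟨ha₁, fun h => ha''1 h.symm, hb₀1⟩
      · exact ⟨ha₂, fun h => ha''2 h.symm, hb₀2⟩
    · have hmem := h
      rw [hA'] at hmem
      obtain ⟨⟨haA, _⟩, hsub⟩ := hmem
      refine ⟨haA, fun he => ha''A' (he ▸ h), fun hadj => ?_⟩
      have : b₀ ∈ B₁ ∪ B₂ ∪ B' := hsub hadj
      rw [hUeq] at this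
      exact this.2 rfl
  obtain ⟨haA, hana'', hab₀⟩ := hafacts
  -- the unique common non-neighbor of a and a''
  obtain ⟨c, hcB, hca, hca''⟩ := keyPair a a'' haA ha''A hana''
  have hcb₀ : c ≠ b₀ := fun h => hca'' (h ▸ hb₀a'')
  -- the target set equals (B \ N a) \ {c, b₀}
  have hseteq : ((B₁ ∪ B₂ ∪ B') \ G.neighborSet a) ∩ G.neighborSet a''
      = (B \ G.neighborSet a) \ {c, b₀} := by
    rw [hUeq]
    ext u
    simp only [Set.mem_inter_iff, Set.mem_diff, Set.mem_singleton_iff, Set.mem_insert_iff]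
    constructor
    · rintro ⟨⟨⟨huB, hub₀⟩, huNa⟩, huNa''⟩
      refine ⟨⟨huB, huNa⟩, ?_⟩
      push_neg
      exact ⟨fun h => hca'' (h ▸ huNa''), hub₀⟩
    · rintro ⟨⟨huB, huNa⟩, hucb₀⟩
      push_neg at hucb₀
      refine ⟨⟨⟨huB, hucb₀.2⟩, huNa⟩, ?_⟩
      by_contra hnotadj
      exact hucb₀.1 (keyUnique a a'' u c haA ha''A hana'' huB huNa hnotadj hcB hca hca'')
  rw [hseteq]
  have hsub2 : ({c, b₀} : Set V) ⊆ B \ G.neighborSet a := by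
    intro z hz
    rcases hz with rfl | rfl
    · exact ⟨hcB, hca⟩
    · exact ⟨hb₀B, hab₀⟩
  rw [Set.ncard_diff hsub2 (Set.toFinite _), Set.ncard_pair hcb₀,
    Set.ncard_diff (hNB a haA) (Set.toFinite _), hreg, hcardB]
  omega
end

section
/- Let G be an (n−k)-regular bipartite false twin-free graph on 2n vertices with bipartition A ∪ B and γ_t(G) = γ_gr^t(G) = 6, let a_1 ≠ a_2 be vertices of A, and set B_2 = N(a_1)\N(a_2), B_1 = N(a_2)\N(a_1), B' = N(a_1) ∩ N(a_2), A' = {a ∈ A\{a_1,a_2} : N(a) ⊆ B_1 ∪ B_2 ∪ B'}, and A'' = A \ (A' ∪ {a_1, a_2}). Then n = k² − k + 1, |A'| = k − 2, and |A''| = (k − 1)². -/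
set_option linter.unnecessarySimpa false
set_option linter.unusedSectionVars false

/-- Legal sequences stored in *reverse* chronological order (most recent first). -/
inductive RLeg {V : Type*} (G : SimpleGraph V) : List V → Prop
  | nil : RLeg G []
  | single (a : V) : RLeg G [a]
  | cons (a : V) (l : List V) (h : RLeg G l)
      (hw : ∃ w, G.Adj a w ∧ ∀ u ∈ l, ¬ G.Adj u w)
      (hnot : a ∉ l) : RLeg G (a :: l)

lemma RLeg.nodup {V : Type*} {G : SimpleGraph V} {l : List V} (h : RLeg G l) : l.Nodup := by
  induction h with
  | nil => simp
  | single a => simp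
  | cons a l h hw hnot ih => simpa [List.nodup_cons, hnot]

lemma RLeg.isLegalSeq {V : Type*} {G : SimpleGraph V} {l : List V} (h : RLeg G l) :
    IsLegalSeq G l.reverse := by
  induction h with
  | nil =>
    exact ⟨by simp, fun i _ => absurd i.2 (by simp)⟩
  | single a =>
    refine ⟨by simp, fun i hi => ?_⟩
    have h1 : (i : ℕ) < 1 := by simpa using i.2
    omega
  | cons a l h hw ih ihh =>
    obtain ⟨hnd, hleg⟩ := ihh
    have hrev : (a :: l).reverse = l.reverse ++ [a] := by simp
    have hget : ∀ (m : ℕ) (hm : m < (a :: l).reverse.length),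
        (a :: l).reverse.get ⟨m, hm⟩
          = if hml : m < l.reverse.length then l.reverse.get ⟨m, hml⟩ else a := by
      intro m hm
      have hm' : m < (l.reverse ++ [a]).length := by rw [← hrev]; exact hm
      have heq : (a :: l).reverse.get ⟨m, hm⟩ = (l.reverse ++ [a])[m]'hm' := by
        simp only [List.get_eq_getElem]
        exact List.getElem_of_eq hrev hm
      by_cases hml : m < l.reverse.length
      · rw [heq, dif_pos hml]
        simp only [List.get_eq_getElem]
        exact List.getElem_append_left hml
      · have hme : m = l.reverse.length := by
          have : m < l.reverse.length + 1 := by simpa using hm'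
          omega
        rw [heq, dif_neg hml]
        subst hme
        exact List.getElem_concat_length rfl _
    constructor
    · rw [hrev]
      refine List.nodup_append.2 ⟨hnd, List.nodup_singleton a, ?_⟩
      intro x hx y hy hxy
      have : x = a := by simp at hy; rw [hxy, hy]
      exact ih (List.mem_reverse.1 (this ▸ hx))
    · intro i hi
      have hlen : (a :: l).reverse.length = l.reverse.length + 1 := by simp
      by_cases hil : (i : ℕ) < l.reverse.length
      · obtain ⟨w, hw1, hw2⟩ := hleg ⟨i, hil⟩ hi
        refine ⟨w, ?_, ?_⟩
        · rw [show (a :: l).reverse.get i = _ from hget i i.2, dif_pos hil]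
          exact hw1
        · intro j hj
          have hjl : (j : ℕ) < l.reverse.length := lt_trans hj hil
          rw [show (a :: l).reverse.get j = _ from hget j j.2, dif_pos hjl]
          exact hw2 ⟨j, hjl⟩ hj
      · obtain ⟨w, hw1, hw2⟩ := hw
        refine ⟨w, ?_, ?_⟩
        · rw [show (a :: l).reverse.get i = _ from hget i i.2, dif_neg hil]
          exact hw1
        · intro j hj
          have hjl : (j : ℕ) < l.reverse.length := by
            have h3 : (i : ℕ) < l.length + 1 := by simpa using i.2
            have h4 : ¬ (i : ℕ) < l.length := by simpa using hil
            simp only [List.length_reverse]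
            omega
          rw [show (a :: l).reverse.get j = _ from hget j j.2, dif_pos hjl]
          have hmem : l.reverse.get ⟨(j:ℕ), hjl⟩ ∈ l := by
            rw [← List.mem_reverse]
            exact List.get_mem l.reverse ⟨(j : ℕ), hjl⟩
          exact hw2 _ hmem

set_option linter.unnecessarySimpa false

section Aux
variable {V : Type*} {G : SimpleGraph V} {A B : Set V}

/-- `S` covers `T`: every vertex of `T` has a neighbor in `S`. -/
def Covers (G : SimpleGraph V) (S T : Set V) : Prop := ∀ b ∈ T, ∃ a ∈ S, G.Adj b a

variable (hpart : ∀ v : V, (v ∈ A ∧ v ∉ B) ∨ (v ∈ B ∧ v ∉ A))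
  (hadj : ∀ ⦃u v : V⦄, G.Adj u v → (u ∈ A ∧ v ∈ B) ∨ (u ∈ B ∧ v ∈ A))

include hpart hadj in
lemma memA_of_adj {u v : V} (h : G.Adj u v) (hv : v ∈ B) : u ∈ A := by
  rcases hadj h with ⟨h1, h2⟩ | ⟨h1, h2⟩
  · exact h1
  · rcases hpart v with ⟨_, hnB⟩ | ⟨_, hnA⟩
    · exact absurd hv hnB
    · exact absurd h2 hnA

include hpart hadj in
lemma not_adj_AA {u v : V} (hu : u ∈ A) (hv : v ∈ A) : ¬ G.Adj u v := by
  intro h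
  rcases hadj h with ⟨h1, h2⟩ | ⟨h1, h2⟩
  · rcases hpart v with ⟨_, hnB⟩ | ⟨_, hnA⟩
    · exact hnB h2
    · exact hnA hv
  · rcases hpart u with ⟨_, hnB⟩ | ⟨_, hnA⟩
    · exact hnB h1
    · exact hnA hu
end Aux

section Side
variable {V : Type*} [Fintype V] {G : SimpleGraph V} {A B : Set V}
variable (hpart : ∀ v : V, (v ∈ A ∧ v ∉ B) ∨ (v ∈ B ∧ v ∉ A))
  (hadj : ∀ ⦃u v : V⦄, G.Adj u v → (u ∈ A ∧ v ∈ B) ∨ (u ∈ B ∧ v ∈ A))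
  (hniso : ∀ v : V, ∃ u, G.Adj v u)

include hpart hadj hniso in
/-- One-step extension of a legal `A`-sequence by an uncovered vertex of `B`. -/
lemma extend_step {l : List V} (hl : RLeg G l) (hlA : ∀ x ∈ l, x ∈ A)
    {b : V} (hb : b ∈ B) (hunc : ∀ x ∈ l, ¬ G.Adj b x) :
    ∃ a, RLeg G (a :: l) ∧ (∀ x ∈ a :: l, x ∈ A) ∧ G.Adj b a := by
  obtain ⟨a, hba⟩ := hniso b
  have haA : a ∈ A := memA_of_adj hpart hadj hba.symm hb
  have hanl : a ∉ l := fun hal => hunc a hal hba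
  refine ⟨a, ?_, ?_, hba⟩
  · cases l with
    | nil => exact RLeg.single a
    | cons c m =>
      exact RLeg.cons a (c :: m) hl ⟨b, hba.symm, fun u hu => fun h => hunc u hu h.symm⟩ hanl
  · intro x hx
    rcases List.mem_cons.1 hx with rfl | hx
    · exact haA
    · exact hlA x hx

include hpart hadj hniso in
/-- Any legal `A`-sequence extends to one covering `B`. -/
lemma extend_to_cover {l : List V} (hl : RLeg G l) (hlA : ∀ x ∈ l, x ∈ A) :
    ∃ m : List V, RLeg G m ∧ (∀ x ∈ m, x ∈ A) ∧ l.length ≤ m.length ∧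
      Covers G {x | x ∈ m} B := by
  obtain ⟨N, hN⟩ : ∃ N, ({b ∈ B | ∀ x ∈ l, ¬ G.Adj b x}).ncard ≤ N :=
    ⟨_, le_rfl⟩
  induction N generalizing l with
  | zero =>
    refine ⟨l, hl, hlA, le_rfl, ?_⟩
    intro b hb
    by_contra hcon
    push_neg at hcon
    have hbmem : b ∈ {b ∈ B | ∀ x ∈ l, ¬ G.Adj b x} := ⟨hb, fun x hx => hcon x hx⟩
    have : 0 < ({b ∈ B | ∀ x ∈ l, ¬ G.Adj b x}).ncard :=
      (Set.ncard_pos (Set.toFinite _)).2 ⟨b, hbmem⟩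
    omega
  | succ N ih =>
    by_cases hU : {b ∈ B | ∀ x ∈ l, ¬ G.Adj b x} = ∅
    · refine ⟨l, hl, hlA, le_rfl, ?_⟩
      intro b hb
      by_contra hcon
      push_neg at hcon
      have : b ∈ {b ∈ B | ∀ x ∈ l, ¬ G.Adj b x} := ⟨hb, fun x hx => hcon x hx⟩
      rw [hU] at this
      exact this
    · obtain ⟨b, hb, hbunc⟩ := Set.nonempty_iff_ne_empty.2 hU
      obtain ⟨a, hl', hlA', hba⟩ := extend_step hpart hadj hniso hl hlA hb hbunc
      have hsub : {c ∈ B | ∀ x ∈ a :: l, ¬ G.Adj c x} ⊆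
          {c ∈ B | ∀ x ∈ l, ¬ G.Adj c x} \ {b} := by
        rintro c ⟨hcB, hcunc⟩
        refine ⟨⟨hcB, fun x hx => hcunc x (List.mem_cons_of_mem _ hx)⟩, ?_⟩
        intro hcb
        rw [Set.mem_singleton_iff] at hcb
        subst hcb
        exact hcunc a List.mem_cons_self hba
      have hcard : ({c ∈ B | ∀ x ∈ a :: l, ¬ G.Adj c x}).ncard ≤ N := by
        have h1 := Set.ncard_le_ncard hsub (Set.toFinite _)
        have hbmem : b ∈ {c ∈ B | ∀ x ∈ l, ¬ G.Adj c x} := ⟨hb, hbunc⟩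
        have h2 : (({c ∈ B | ∀ x ∈ l, ¬ G.Adj c x}) \ {b}).ncard
            = ({c ∈ B | ∀ x ∈ l, ¬ G.Adj c x}).ncard - 1 :=
          Set.ncard_diff_singleton_of_mem hbmem
        have h3 : 0 < ({c ∈ B | ∀ x ∈ l, ¬ G.Adj c x}).ncard :=
          (Set.ncard_pos (Set.toFinite _)).2 ⟨b, hb, hbunc⟩
        omega
      obtain ⟨m, hm1, hm2, hm3, hm4⟩ := ih hl' hlA' hcard
      exact ⟨m, hm1, hm2, le_trans (by simp) hm3, hm4⟩

include hpart hadj hniso in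
/-- Any nodup list of elements of a *minimum* cover is legal. -/
lemma min_cover_legal {S : Set V} (hSA : S ⊆ A) (hScov : Covers G S B)
    (hmin : ∀ T : Set V, T ⊆ A → Covers G T B → S.ncard ≤ T.ncard) :
    ∀ l : List V, l.Nodup → (∀ x ∈ l, x ∈ S) → RLeg G l := by
  have hpriv : ∀ a ∈ S, ∃ b ∈ B, G.Adj a b ∧ ∀ a' ∈ S, a' ≠ a → ¬ G.Adj a' b := by
    intro a haS
    by_contra hcon
    push_neg at hcon
    have hcov' : Covers G (S \ {a}) B := by
      intro b hb
      obtain ⟨a', ha'S, hba'⟩ := hScov b hb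
      by_cases h : a' = a
      · subst h
        obtain ⟨a'', ha''S, ha''ne, ha''adj⟩ := hcon b hb hba'.symm
        exact ⟨a'', ⟨ha''S, ha''ne⟩, ha''adj.symm⟩
      · exact ⟨a', ⟨ha'S, h⟩, hba'⟩
    have hle := hmin _ (fun x hx => hSA hx.1) hcov'
    have hlt : (S \ {a}).ncard < S.ncard := by
      rw [Set.ncard_diff_singleton_of_mem haS]
      have : 0 < S.ncard := (Set.ncard_pos (Set.toFinite _)).2 ⟨a, haS⟩
      omega
    omega
  intro l
  induction l with
  | nil => exact fun _ _ => RLeg.nil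
  | cons a m ih =>
    intro hnd hmem
    have haS : a ∈ S := hmem a List.mem_cons_self
    obtain ⟨b, _, hab, hb2⟩ := hpriv a haS
    have hnd' := (List.nodup_cons.1 hnd)
    refine RLeg.cons a m (ih hnd'.2 (fun x hx => hmem x (List.mem_cons_of_mem _ hx))) ?_ hnd'.1
    refine ⟨b, hab, fun u hu hadju => ?_⟩
    exact hb2 u (hmem u (List.mem_cons_of_mem _ hu)) (fun h => hnd'.1 (h ▸ hu)) hadju

include hpart hadj hniso in
/-- Combining a legal `A`-sequence with a legal `B`-sequence (chosen later). -/
lemma combine_legal {lA lB : List V} (hA : RLeg G lA) (hAmem : ∀ x ∈ lA, x ∈ A)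
    (hB : RLeg G lB) (hBmem : ∀ x ∈ lB, x ∈ B) :
    RLeg G (lB ++ lA) := by
  induction hB with
  | nil => simpa using hA
  | single b =>
    have hbB : b ∈ B := hBmem b (by simp)
    cases hla : lA with
    | nil => simpa using RLeg.single b
    | cons c m =>
      subst hla
      obtain ⟨w, hbw⟩ := hniso b
      have hwA : w ∈ A := memA_of_adj hpart hadj hbw.symm hbB
      refine RLeg.cons b (c :: m) hA ⟨w, hbw, fun u hu => not_adj_AA hpart hadj (hAmem u hu) hwA⟩ ?_
      intro hbl
      rcases hpart b with ⟨hbA, _⟩ | ⟨_, hbnA⟩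
      · rcases hpart b with h | h
        · exact absurd hbB h.2
        · exact absurd hbA h.2
      · exact hbnA (hAmem b hbl)
  | cons b m hm hw hbm ihm =>
    have hbB : b ∈ B := hBmem b (by simp)
    have hmmem : ∀ x ∈ m, x ∈ B := fun x hx => hBmem x (List.mem_cons_of_mem _ hx)
    obtain ⟨w, hbw, hwm⟩ := hw
    have hwA : w ∈ A := memA_of_adj hpart hadj hbw.symm hbB
    refine RLeg.cons b (m ++ lA) (ihm hmmem) ⟨w, hbw, ?_⟩ ?_
    · intro u hu
      rcases List.mem_append.1 hu with hu | hu
      · exact hwm u hu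
      · exact not_adj_AA hpart hadj (hAmem u hu) hwA
    · intro hb
      rcases List.mem_append.1 hb with hb | hb
      · exact hbm hb
      · rcases hpart b with ⟨hbA, hnB⟩ | ⟨_, hbnA⟩
        · exact hnB hbB
        · exact hbnA (hAmem b hb)
end Side

section Side2
variable {V : Type*} [Fintype V] {G : SimpleGraph V} {A B : Set V}
variable (hpart : ∀ v : V, (v ∈ A ∧ v ∉ B) ∨ (v ∈ B ∧ v ∉ A))
  (hadj : ∀ ⦃u v : V⦄, G.Adj u v → (u ∈ A ∧ v ∈ B) ∨ (u ∈ B ∧ v ∈ A))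
  (hniso : ∀ v : V, ∃ u, G.Adj v u)

include hpart hadj hniso in
lemma exists_min_cover :
    ∃ S : Set V, S ⊆ A ∧ Covers G S B ∧
      ∀ T : Set V, T ⊆ A → Covers G T B → S.ncard ≤ T.ncard := by
  have hAcov : Covers G A B := by
    intro b hb
    obtain ⟨u, hu⟩ := hniso b
    exact ⟨u, memA_of_adj hpart hadj hu.symm hb, hu⟩
  set 𝒞 := {m : ℕ | ∃ S : Set V, S ⊆ A ∧ Covers G S B ∧ S.ncard = m} with h𝒞
  have hne : 𝒞.Nonempty := ⟨A.ncard, A, le_refl A, hAcov, rfl⟩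
  obtain ⟨S, hS1, hS2, hS3⟩ := Nat.sInf_mem hne
  refine ⟨S, hS1, hS2, fun T hT1 hT2 => ?_⟩
  rw [hS3]
  exact Nat.sInf_le ⟨T, hT1, hT2, rfl⟩

include hpart hadj in
lemma side_ncard_eq {d : ℕ} (hd : ∀ v : V, (G.neighborSet v).ncard = d) (hd1 : 1 ≤ d) :
    A.ncard = B.ncard := by
  classical
  have hnf : ∀ v : V, (G.neighborFinset v).card = d := by
    intro v
    rw [← hd v, SimpleGraph.neighborFinset_def, Set.ncard_eq_toFinset_card']
  set Af := A.toFinite.toFinset with hAf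
  set Bf := B.toFinite.toFinset with hBf
  set E := Finset.univ.filter (fun p : V × V => G.Adj p.1 p.2 ∧ p.1 ∈ A) with hE
  have hmemE : ∀ p : V × V, p ∈ E ↔ G.Adj p.1 p.2 ∧ p.1 ∈ A := by
    intro p; simp [hE]
  have h1 : E.card = Af.card * d := by
    rw [Finset.card_eq_sum_card_fiberwise (f := Prod.fst) (t := Af)
      (fun p hp => by rw [Finset.mem_coe, Set.Finite.mem_toFinset]; exact ((hmemE p).1 hp).2)]
    rw [Finset.sum_congr rfl (g := fun _ => d) ?_, Finset.sum_const, smul_eq_mul]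
    intro a ha
    rw [← hnf a]
    have hfib : E.filter (fun p => p.1 = a) = (G.neighborFinset a).image (fun w => (a, w)) := by
      ext p
      simp only [Finset.mem_filter, Finset.mem_image, SimpleGraph.mem_neighborFinset]
      constructor
      · rintro ⟨hpE, hpa⟩
        exact ⟨p.2, by rw [← hpa]; exact ((hmemE p).1 hpE).1, by rw [← hpa]⟩
      · rintro ⟨w, hw, rfl⟩
        exact ⟨(hmemE _).2 ⟨hw, by rwa [← Set.Finite.mem_toFinset A.toFinite]⟩, rfl⟩
    rw [hfib, Finset.card_image_of_injective _ (fun x y h => by simpa using h)]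
  have hBmem : ∀ p : V × V, p ∈ E → p.2 ∈ Bf := by
    intro p hp
    obtain ⟨hadj', hA⟩ := (hmemE p).1 hp
    rw [Set.Finite.mem_toFinset]
    rcases hadj hadj' with ⟨_, h2⟩ | ⟨h1, _⟩
    · exact h2
    · rcases hpart p.1 with ⟨_, hnB⟩ | ⟨_, hnA⟩
      · exact absurd h1 hnB
      · exact absurd hA hnA
  have h2 : E.card = Bf.card * d := by
    rw [Finset.card_eq_sum_card_fiberwise (f := Prod.snd) (t := Bf) hBmem]
    rw [Finset.sum_congr rfl (g := fun _ => d) ?_, Finset.sum_const, smul_eq_mul]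
    intro b hb
    rw [← hnf b]
    have hbB : b ∈ B := by rwa [Set.Finite.mem_toFinset] at hb
    have hfib : E.filter (fun p => p.2 = b) = (G.neighborFinset b).image (fun w => (w, b)) := by
      ext p
      simp only [Finset.mem_filter, Finset.mem_image, SimpleGraph.mem_neighborFinset]
      constructor
      · rintro ⟨hpE, hpb⟩
        refine ⟨p.1, ?_, ?_⟩
        · have := ((hmemE p).1 hpE).1
          rw [hpb] at this
          exact this.symm
        · rw [← hpb]
      · rintro ⟨w, hw, rfl⟩
        exact ⟨(hmemE _).2 ⟨hw.symm, memA_of_adj hpart hadj hw.symm hbB⟩, rfl⟩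
    rw [hfib, Finset.card_image_of_injective _ (fun x y h => by simpa using h)]
  have : Af.card = Bf.card := Nat.eq_of_mul_eq_mul_right hd1 (h1 ▸ h2)
  rw [Set.ncard_eq_toFinset_card _ A.toFinite, Set.ncard_eq_toFinset_card _ B.toFinite]
  exact this
end Side2

section Side3
variable {V : Type*} [Fintype V] {G : SimpleGraph V} {A B : Set V}
variable (hpart : ∀ v : V, (v ∈ A ∧ v ∉ B) ∨ (v ∈ B ∧ v ∉ A))
  (hadj : ∀ ⦃u v : V⦄, G.Adj u v → (u ∈ A ∧ v ∈ B) ∨ (u ∈ B ∧ v ∈ A))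
  (hniso : ∀ v : V, ∃ u, G.Adj v u)

include hpart hadj hniso in
/-- If every legal `A`-sequence has length at most 2, then every pair of distinct
vertices of `A` covers `B`. -/
lemma pairs_cover (hpriv : ∀ a a' : V, a ≠ a' → ∃ w, G.Adj a' w ∧ ¬ G.Adj a w)
    (hlen2 : ∀ l : List V, RLeg G l → (∀ x ∈ l, x ∈ A) → l.length ≤ 2) :
    ∀ a ∈ A, ∀ a' ∈ A, a ≠ a' → ∀ b ∈ B, G.Adj b a ∨ G.Adj b a' := by
  intro a ha a' ha' hne b hb
  by_contra hcon
  push_neg at hcon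
  have hpair : RLeg G [a', a] := by
    obtain ⟨w, h1, h2⟩ := hpriv a a' hne
    refine RLeg.cons a' [a] (RLeg.single a) ⟨w, h1, ?_⟩ (by simpa using hne.symm)
    intro u hu
    have : u = a := by simpa using hu
    subst this
    exact h2
  have hmem : ∀ x ∈ [a', a], x ∈ A := by
    intro x hx
    rcases (by simpa using hx : x = a' ∨ x = a) with rfl | rfl
    exacts [ha', ha]
  have hunc : ∀ x ∈ [a', a], ¬ G.Adj b x := by
    intro x hx
    rcases (by simpa using hx : x = a' ∨ x = a) with rfl | rfl
    exacts [hcon.2, hcon.1]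
  obtain ⟨c, hc1, hc2, _⟩ := extend_step hpart hadj hniso hpair hmem hb hunc
  have := hlen2 _ hc1 hc2
  simp at this
end Side3

/-- `n = k² − k + 1`, `|A'| = k − 2` and `|A''| = (k − 1)²`. -/
theorem claim_sizes
    {V : Type*} [Fintype V] (G : SimpleGraph V) (n k : ℕ) (A B : Set V)
    (hbip : IsBipartitionOf G A B) (hftf : FalseTwinFree G)
    (hcard : Fintype.card V = 2 * n)
    (hreg : ∀ v : V, (G.neighborSet v).ncard = n - k)
    (ht : totalDomNum G = 6) (hg : grundyTotalDomNum G = 6)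
    (a₁ a₂ : V) (ha₁ : a₁ ∈ A) (ha₂ : a₂ ∈ A) (hne : a₁ ≠ a₂)
    (B₁ B₂ B' A' : Set V)
    (hB₂ : B₂ = G.neighborSet a₁ \ G.neighborSet a₂)
    (hB₁ : B₁ = G.neighborSet a₂ \ G.neighborSet a₁)
    (hB' : B' = G.neighborSet a₁ ∩ G.neighborSet a₂)
    (hA' : A' = {a ∈ A \ {a₁, a₂} | G.neighborSet a ⊆ B₁ ∪ B₂ ∪ B'})
    (A'' : Set V) (hA'' : A'' = A \ (A' ∪ {a₁, a₂})) :
    n = k ^ 2 - k + 1 ∧ A'.ncard = k - 2 ∧ A''.ncard = (k - 1) ^ 2 := by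
  classical
  obtain ⟨hpart, hadj⟩ := hbip
  have hpart' : ∀ v : V, (v ∈ B ∧ v ∉ A) ∨ (v ∈ A ∧ v ∉ B) := fun v => (hpart v).symm
  have hadj' : ∀ ⦃u v : V⦄, G.Adj u v → (u ∈ B ∧ v ∈ A) ∨ (u ∈ A ∧ v ∈ B) :=
    fun u v h => (hadj h).symm
  -- no isolated vertices
  have hniso : ∀ v : V, ∃ u, G.Adj v u := by
    by_contra hcon
    push_neg at hcon
    obtain ⟨v, hv⟩ := hcon
    have hempty : {m : ℕ | ∃ S : Set V, IsTotalDomSet G S ∧ S.ncard = m} = ∅ := by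
      ext m
      simp only [Set.mem_setOf_eq, Set.mem_empty_iff_false, iff_false, not_exists]
      intro S hS
      obtain ⟨u, _, hu2⟩ := hS.1 v
      exact hv u hu2
    have ht' : totalDomNum G = sInf {m : ℕ | ∃ S : Set V, IsTotalDomSet G S ∧ S.ncard = m} := rfl
    rw [ht', hempty, Nat.sInf_empty] at ht
    omega
  -- length of any total dominating sequence is at most 6
  have hUB : ∀ l : List V, IsTotalDomSeq G l → l.length ≤ 6 := by
    intro l hl
    have hbdd : BddAbove {m : ℕ | ∃ l : List V, IsTotalDomSeq G l ∧ l.length = m} := by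
      refine ⟨Fintype.card V, ?_⟩
      rintro m ⟨l', hl', rfl⟩
      exact List.Nodup.length_le_card hl'.1.1
    have hle : l.length ≤ sSup {m : ℕ | ∃ l : List V, IsTotalDomSeq G l ∧ l.length = m} :=
      le_csSup hbdd ⟨l, hl, rfl⟩
    have hg' : sSup {m : ℕ | ∃ l : List V, IsTotalDomSeq G l ∧ l.length = m} = 6 := hg
    omega
  -- every total dominating set has at least 6 elements
  have hLB : ∀ S : Set V, IsTotalDomSet G S → 6 ≤ S.ncard := by
    intro S hS
    have h1 : sInf {m : ℕ | ∃ S : Set V, IsTotalDomSet G S ∧ S.ncard = m} ≤ S.ncard :=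
      Nat.sInf_le ⟨S, hS, rfl⟩
    have ht' : sInf {m : ℕ | ∃ S : Set V, IsTotalDomSet G S ∧ S.ncard = m} = 6 := ht
    omega
  -- neighborhoods lie in the opposite side
  have hNA : ∀ a ∈ A, G.neighborSet a ⊆ B := by
    intro a ha w hw
    rw [SimpleGraph.mem_neighborSet] at hw
    rcases hadj hw with ⟨_, h2⟩ | ⟨h1, _⟩
    · exact h2
    · rcases hpart a with ⟨_, hnB⟩ | ⟨_, hnA⟩
      · exact absurd h1 hnB
      · exact absurd ha hnA
  have hNB : ∀ b ∈ B, G.neighborSet b ⊆ A := by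
    intro b hb w hw
    rw [SimpleGraph.mem_neighborSet] at hw
    rcases hadj hw with ⟨h1, _⟩ | ⟨_, h2⟩
    · rcases hpart b with ⟨_, hnB⟩ | ⟨_, hnA⟩
      · exact absurd hb hnB
      · exact absurd h1 hnA
    · exact h2
  have hdeg1 : 1 ≤ n - k := by
    obtain ⟨u, hu⟩ := hniso a₁
    have h0 : 0 < (G.neighborSet a₁).ncard :=
      (Set.ncard_pos (Set.toFinite _)).2 ⟨u, hu⟩
    have := hreg a₁
    omega
  -- |A| = |B| = n
  have hABeq : A.ncard = B.ncard := side_ncard_eq hpart hadj hreg hdeg1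
  have hABsum : A.ncard + B.ncard = 2 * n := by
    have hU : (Set.univ : Set V) = A ∪ B := by
      ext v
      simp only [Set.mem_univ, Set.mem_union, true_iff]
      rcases hpart v with h | h
      exacts [Or.inl h.1, Or.inr h.1]
    have hdisj : Disjoint A B := by
      rw [Set.disjoint_left]
      intro v hvA hvB
      rcases hpart v with ⟨_, hnB⟩ | ⟨_, hnA⟩
      exacts [hnB hvB, hnA hvA]
    have h1 := Set.ncard_union_eq hdisj (Set.toFinite _) (Set.toFinite _)
    rw [← h1, ← hU, Set.ncard_univ, Nat.card_eq_fintype_card, hcard]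
  have hAn : A.ncard = n := by omega
  have hBn : B.ncard = n := by omega
  -- non-neighbor counts
  have hMA : ∀ a ∈ A, (B \ G.neighborSet a).ncard = k := by
    intro a ha
    rw [Set.ncard_diff (hNA a ha) (Set.toFinite _), hreg a, hBn]
    omega
  have hMB : ∀ b ∈ B, (A \ G.neighborSet b).ncard = k := by
    intro b hb
    rw [Set.ncard_diff (hNB b hb) (Set.toFinite _), hreg b, hAn]
    omega
  -- k ≥ 1
  have hk1 : 1 ≤ k := by
    by_contra hk0
    have hk0' : k = 0 := by omega
    have h1 : B ⊆ G.neighborSet a₁ := by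
      rw [← Set.diff_eq_empty, ← Set.ncard_eq_zero (Set.toFinite _), hMA a₁ ha₁, hk0']
    have h2 : B ⊆ G.neighborSet a₂ := by
      rw [← Set.diff_eq_empty, ← Set.ncard_eq_zero (Set.toFinite _), hMA a₂ ha₂, hk0']
    exact hftf a₁ a₂ hne
      (subset_antisymm (subset_trans (hNA a₁ ha₁) h2) (subset_trans (hNA a₂ ha₂) h1))
  -- private neighbors (from false-twin-freeness and regularity)
  have hpriv : ∀ a a' : V, a ≠ a' → ∃ w, G.Adj a' w ∧ ¬ G.Adj a w := by
    intro a a' hne'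
    have hne2 : G.neighborSet a' ≠ G.neighborSet a := hftf a' a hne'.symm
    have hnsub : ¬ G.neighborSet a' ⊆ G.neighborSet a := by
      intro hsub
      exact hne2 (Set.eq_of_subset_of_ncard_le hsub (by rw [hreg, hreg]) (Set.toFinite _))
    obtain ⟨w, hw1, hw2⟩ := Set.not_subset.1 hnsub
    exact ⟨w, hw1, hw2⟩
  -- minimum covers of both sides
  obtain ⟨SA, hSA_sub, hSA_cov, hSA_min⟩ := exists_min_cover hpart hadj hniso
  obtain ⟨SB, hSB_sub, hSB_cov, hSB_min⟩ := exists_min_cover hpart' hadj' hniso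
  -- sum of minimum covers is at least 6
  have hsum_ge : 6 ≤ SA.ncard + SB.ncard := by
    have hTDS : IsTotalDomSet G (SA ∪ SB) := by
      intro v
      rcases hpart v with ⟨hvA, _⟩ | ⟨hvB, _⟩
      · obtain ⟨b, hbSB, hadjb⟩ := hSB_cov v hvA
        exact ⟨b, Or.inr hbSB, hadjb⟩
      · obtain ⟨a, haSA, hadja⟩ := hSA_cov v hvB
        exact ⟨a, Or.inl haSA, hadja⟩
    have h1 := hLB _ hTDS
    have h2 := Set.ncard_union_le SA SB
    omega
  -- lists enumerating the minimum covers
  have hlist : ∀ S : Set V, ∃ l : List V, l.Nodup ∧ (∀ x, x ∈ l ↔ x ∈ S) ∧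
      l.length = S.ncard := by
    intro S
    refine ⟨S.toFinite.toFinset.toList, Finset.nodup_toList _, ?_, ?_⟩
    · intro x
      rw [Finset.mem_toList, Set.Finite.mem_toFinset]
    · rw [Finset.length_toList, ← Set.ncard_eq_toFinset_card]
  obtain ⟨lA0, hlA0_nd, hlA0_mem, hlA0_len⟩ := hlist SA
  obtain ⟨lB0, hlB0_nd, hlB0_mem, hlB0_len⟩ := hlist SB
  have hlA0_leg : RLeg G lA0 :=
    min_cover_legal hpart hadj hniso hSA_sub hSA_cov hSA_min lA0 hlA0_nd
      (fun x hx => (hlA0_mem x).1 hx)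
  have hlB0_leg : RLeg G lB0 :=
    min_cover_legal hpart' hadj' hniso hSB_sub hSB_cov hSB_min lB0 hlB0_nd
      (fun x hx => (hlB0_mem x).1 hx)
  have hlA0_A : ∀ x ∈ lA0, x ∈ A := fun x hx => hSA_sub ((hlA0_mem x).1 hx)
  have hlB0_B : ∀ x ∈ lB0, x ∈ B := fun x hx => hSB_sub ((hlB0_mem x).1 hx)
  have hlA0_cov : Covers G {x | x ∈ lA0} B := by
    intro b hb
    obtain ⟨a, ha1, ha2⟩ := hSA_cov b hb
    exact ⟨a, (hlA0_mem a).2 ha1, ha2⟩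
  have hlB0_cov : Covers G {x | x ∈ lB0} A := by
    intro a ha
    obtain ⟨b, hb1, hb2⟩ := hSB_cov a ha
    exact ⟨b, (hlB0_mem b).2 hb1, hb2⟩
  -- the key length bound
  have hkey : ∀ lA lB : List V, RLeg G lA → (∀ x ∈ lA, x ∈ A) → Covers G {x | x ∈ lA} B →
      RLeg G lB → (∀ x ∈ lB, x ∈ B) → Covers G {x | x ∈ lB} A →
      lA.length + lB.length ≤ 6 := by
    intro lA lB h1 h2 h3 h4 h5 h6
    have hcomb : RLeg G (lB ++ lA) := combine_legal hpart hadj hniso h1 h2 h4 h5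
    have htds : IsTotalDomSeq G (lB ++ lA).reverse := by
      refine ⟨hcomb.isLegalSeq, ?_⟩
      intro v
      rcases hpart v with ⟨hvA, _⟩ | ⟨hvB, _⟩
      · obtain ⟨b, hb1, hb2⟩ := h6 v hvA
        refine ⟨b, ?_, hb2⟩
        simp only [Set.mem_setOf_eq, List.mem_reverse, List.mem_append]
        exact Or.inl hb1
      · obtain ⟨a, ha1, ha2⟩ := h3 v hvB
        refine ⟨a, ?_, ha2⟩
        simp only [Set.mem_setOf_eq, List.mem_reverse, List.mem_append]
        exact Or.inr ha1
    have := hUB _ htds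
    simp only [List.length_reverse, List.length_append] at this
    omega
  have hsum_le : SA.ncard + SB.ncard ≤ 6 := by
    have := hkey lA0 lB0 hlA0_leg hlA0_A hlA0_cov hlB0_leg hlB0_B hlB0_cov
    omega
  -- length bounds for arbitrary legal one-sided sequences
  have hlenA : ∀ l : List V, RLeg G l → (∀ x ∈ l, x ∈ A) → l.length ≤ SA.ncard := by
    intro l hl hmem
    obtain ⟨m, hm1, hm2, hm3, hm4⟩ := extend_to_cover hpart hadj hniso hl hmem
    have := hkey m lB0 hm1 hm2 hm4 hlB0_leg hlB0_B hlB0_cov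
    omega
  have hlenB : ∀ l : List V, RLeg G l → (∀ x ∈ l, x ∈ B) → l.length ≤ SB.ncard := by
    intro l hl hmem
    obtain ⟨m, hm1, hm2, hm3, hm4⟩ := extend_to_cover hpart' hadj' hniso hl hmem
    have := hkey lA0 m hlA0_leg hlA0_A hlA0_cov hm1 hm2 hm4
    omega
  -- both minimum covers have at least 2 elements
  have hnn : n - k < n := by omega
  have hc2 : ∀ (X Y : Set V), X.ncard = n → Covers G Y X → Y.Nonempty ∧
      (∀ y, Y = {y} → False) := by
    intro X Y hX hcov
    have hXne : X.Nonempty := by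
      rw [← Set.ncard_pos (Set.toFinite _), hX]
      omega
    obtain ⟨x, hx⟩ := hXne
    obtain ⟨y, hy1, hy2⟩ := hcov x hx
    refine ⟨⟨y, hy1⟩, ?_⟩
    intro y' hY
    have hsub : X ⊆ G.neighborSet y' := by
      intro x' hx'
      obtain ⟨z, hz1, hz2⟩ := hcov x' hx'
      rw [hY, Set.mem_singleton_iff] at hz1
      subst hz1
      exact hz2.symm
    have hle := Set.ncard_le_ncard hsub (Set.toFinite _)
    rw [hX, hreg] at hle
    omega
  have hcA2 : 2 ≤ SA.ncard := by
    obtain ⟨hne', hsing⟩ := hc2 B SA hBn hSA_cov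
    rcases Set.eq_empty_or_nonempty SA with h | h
    · exact absurd h (Set.nonempty_iff_ne_empty.1 hne')
    by_contra hcon
    have h1 : SA.ncard = 1 := by
      have : 0 < SA.ncard := (Set.ncard_pos (Set.toFinite _)).2 hne'
      omega
    obtain ⟨y, hy⟩ := (Set.ncard_eq_one).1 h1
    exact hsing y hy
  have hcB2 : 2 ≤ SB.ncard := by
    obtain ⟨hne', hsing⟩ := hc2 A SB hAn hSB_cov
    by_contra hcon
    have h1 : SB.ncard = 1 := by
      have : 0 < SB.ncard := (Set.ncard_pos (Set.toFinite _)).2 hne'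
      omega
    obtain ⟨y, hy⟩ := (Set.ncard_eq_one).1 h1
    exact hsing y hy
  -- rule out a minimum cover of size 2 on either side
  have htwoB : ∃ b b' : V, b ∈ B ∧ b' ∈ B ∧ b ≠ b' := by
    have h1 : 1 < B.ncard := by rw [hBn]; omega
    obtain ⟨b, hb⟩ : B.Nonempty := (Set.ncard_pos (Set.toFinite _)).1 (by omega)
    obtain ⟨b', hb', hbne⟩ := Set.exists_ne_of_one_lt_ncard h1 b
    exact ⟨b', b, hb', hb, hbne⟩
  have hnotA2 : SA.ncard ≠ 2 := by
    intro hcA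
    have hlen2 : ∀ l : List V, RLeg G l → (∀ x ∈ l, x ∈ A) → l.length ≤ 2 := by
      intro l h1 h2
      have := hlenA l h1 h2
      omega
    have hpairs := pairs_cover hpart hadj hniso hpriv hlen2
    have hk_le1 : k ≤ 1 := by
      by_contra hk2
      have hb_ex : (B \ G.neighborSet a₁).Nonempty := by
        rw [← Set.ncard_pos (Set.toFinite _), hMA a₁ ha₁]
        omega
      obtain ⟨b, hbB, hbna⟩ := hb_ex
      have hT := hMB b hbB
      have ha₁T : a₁ ∈ A \ G.neighborSet b := by
        refine ⟨ha₁, fun h => hbna ?_⟩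
        rw [SimpleGraph.mem_neighborSet] at h ⊢
        exact h.symm
      obtain ⟨a', ha'T, ha'ne⟩ :=
        Set.exists_ne_of_one_lt_ncard (s := A \ G.neighborSet b) (by omega) a₁
      rcases hpairs a₁ ha₁ a' ha'T.1 (Ne.symm ha'ne) b hbB with h | h
      · exact hbna h.symm
      · exact ha'T.2 h
    have hk_eq : k = 1 := by omega
    obtain ⟨b, b', hbB, hb'B, hbne⟩ := htwoB
    have hcovB : Covers G ({b, b'} : Set V) A := by
      intro a haA
      by_contra hcon
      push_neg at hcon
      have hsub : ({b, b'} : Set V) ⊆ B \ G.neighborSet a := by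
        intro x hx
        have hxB : x ∈ B := by
          rcases hx with h | h
          · rw [show x = b from h]; exact hbB
          · rw [show x = b' from h]; exact hb'B
        exact ⟨hxB, fun hmem => hcon x hx hmem⟩
      have := Set.ncard_le_ncard hsub (Set.toFinite _)
      rw [Set.ncard_pair hbne, hMA a haA, hk_eq] at this
      omega
    have hle := hSB_min ({b, b'} : Set V) (by
      intro x hx
      rcases hx with h | h
      · rw [show x = b from h]; exact hbB
      · rw [show x = b' from h]; exact hb'B) hcovB
    rw [Set.ncard_pair hbne] at hle
    omega
  have hnotB2 : SB.ncard ≠ 2 := by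
    intro hcB
    have hlen2 : ∀ l : List V, RLeg G l → (∀ x ∈ l, x ∈ B) → l.length ≤ 2 := by
      intro l h1 h2
      have := hlenB l h1 h2
      omega
    have hpairs := pairs_cover hpart' hadj' hniso hpriv hlen2
    have hk_le1 : k ≤ 1 := by
      by_contra hk2
      have hb_ex : 1 < (B \ G.neighborSet a₁).ncard := by
        rw [hMA a₁ ha₁]; omega
      obtain ⟨b, hbmem⟩ : (B \ G.neighborSet a₁).Nonempty :=
        (Set.ncard_pos (Set.toFinite _)).1 (by omega)
      obtain ⟨b', hb'mem, hb'ne⟩ := Set.exists_ne_of_one_lt_ncard hb_ex b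
      rcases hpairs b' hb'mem.1 b hbmem.1 hb'ne a₁ ha₁ with h | h
      · exact hb'mem.2 h
      · exact hbmem.2 h
    have hk_eq : k = 1 := by omega
    have hcovA : Covers G ({a₁, a₂} : Set V) B := by
      intro b hbB
      by_contra hcon
      push_neg at hcon
      have hsub : ({a₁, a₂} : Set V) ⊆ A \ G.neighborSet b := by
        intro x hx
        have hxA : x ∈ A := by
          rcases hx with h | h
          · rw [show x = a₁ from h]; exact ha₁
          · rw [show x = a₂ from h]; exact ha₂
        exact ⟨hxA, fun hmem => hcon x hx hmem⟩
      have := Set.ncard_le_ncard hsub (Set.toFinite _)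
      rw [Set.ncard_pair hne, hMB b hbB, hk_eq] at this
      omega
    have hle := hSA_min ({a₁, a₂} : Set V) (by
      intro x hx
      rcases hx with h | h
      · rw [show x = a₁ from h]; exact ha₁
      · rw [show x = a₂ from h]; exact ha₂) hcovA
    rw [Set.ncard_pair hne] at hle
    omega
  have hcA3 : SA.ncard = 3 := by omega
  have hcB3 : SB.ncard = 3 := by omega
  -- any two distinct vertices of A have a common non-neighbor in B
  have hApair : ∀ a ∈ A, ∀ a' ∈ A, a ≠ a' → ∃ p ∈ B, ¬ G.Adj p a ∧ ¬ G.Adj p a' := by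
    intro a ha a' ha' hne'
    by_contra hcon
    push_neg at hcon
    have hcov : Covers G ({a, a'} : Set V) B := by
      intro b hb
      by_cases h : G.Adj b a
      · exact ⟨a, by simp, h⟩
      · exact ⟨a', by simp, hcon b hb h⟩
    have hle := hSA_min ({a, a'} : Set V) (by
      intro x hx
      rcases hx with h | h
      · rw [show x = a from h]; exact ha
      · rw [show x = a' from h]; exact ha') hcov
    rw [Set.ncard_pair hne'] at hle
    omega
  have hBpair : ∀ b ∈ B, ∀ b' ∈ B, b ≠ b' → ∃ q ∈ A, ¬ G.Adj q b ∧ ¬ G.Adj q b' := by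
    intro b hb b' hb' hne'
    by_contra hcon
    push_neg at hcon
    have hcov : Covers G ({b, b'} : Set V) A := by
      intro a ha
      by_cases h : G.Adj a b
      · exact ⟨b, by simp, h⟩
      · exact ⟨b', by simp, hcon a ha h⟩
    have hle := hSB_min ({b, b'} : Set V) (by
      intro x hx
      rcases hx with h | h
      · rw [show x = b from h]; exact hb
      · rw [show x = b' from h]; exact hb') hcov
    rw [Set.ncard_pair hne'] at hle
    omega
  -- the triple property
  have htriple : ∀ a ∈ A, ∀ a' ∈ A, ∀ a'' ∈ A, a ≠ a' → a ≠ a'' → a' ≠ a'' →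
      ∀ x ∈ B, ¬ G.Adj x a → ¬ G.Adj x a' → ¬ G.Adj x a'' →
      ∀ y : V, ¬ G.Adj y a → ¬ G.Adj y a' → ¬ G.Adj y a'' := by
    intro a ha a' ha' c hc h1 h2 h3 x hx hxa hxa' hxc y hya hya'
    by_contra hy
    have hl2 : RLeg G [a', a] := by
      obtain ⟨w, hw1, hw2⟩ := hpriv a a' h1
      refine RLeg.cons a' [a] (RLeg.single a) ⟨w, hw1, ?_⟩ (by simpa using h1.symm)
      intro u hu
      rw [show u = a by simpa using hu]
      exact hw2
    have hl3 : RLeg G [c, a', a] := by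
      refine RLeg.cons c [a', a] hl2 ⟨y, hy.symm, ?_⟩ ?_
      · intro u hu
        rcases (by simpa using hu : u = a' ∨ u = a) with rfl | rfl
        · exact fun hadj2 => hya' hadj2.symm
        · exact fun hadj2 => hya hadj2.symm
      · intro hmem
        rcases (by simpa using hmem : c = a' ∨ c = a) with rfl | rfl
        · exact h3 rfl
        · exact h2 rfl
    have hmem3 : ∀ u ∈ [c, a', a], u ∈ A := by
      intro u hu
      rcases (by simpa using hu : u = c ∨ u = a' ∨ u = a) with rfl | rfl | rfl
      exacts [hc, ha', ha]
    have hunc : ∀ u ∈ [c, a', a], ¬ G.Adj x u := by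
      intro u hu
      rcases (by simpa using hu : u = c ∨ u = a' ∨ u = a) with rfl | rfl | rfl
      exacts [hxc, hxa', hxa]
    obtain ⟨d, hd1, hd2, _⟩ := extend_step hpart hadj hniso hl3 hmem3 hx hunc
    have := hlenA _ hd1 hd2
    rw [hcA3] at this
    simp at this
  -- uniqueness of the common non-neighbor
  have huniq : ∀ a ∈ A, ∀ a' ∈ A, a ≠ a' → ∀ x ∈ B, ∀ y ∈ B,
      ¬ G.Adj x a → ¬ G.Adj x a' → ¬ G.Adj y a → ¬ G.Adj y a' → x = y := by
    intro a ha a' ha' hne' x hx y hy hxa hxa' hya hya'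
    by_contra hxy
    apply hftf x y hxy
    ext u
    simp only [SimpleGraph.mem_neighborSet]
    constructor
    · intro hxu
      have huA : u ∈ A := memA_of_adj hpart hadj hxu.symm hx
      have hu1 : a ≠ u := by rintro rfl; exact hxa hxu
      have hu2 : a' ≠ u := by rintro rfl; exact hxa' hxu
      by_contra hyu
      exact htriple a ha a' ha' u huA hne' hu1 hu2 y hy hya hya' hyu x hxa hxa' hxu
    · intro hyu
      have huA : u ∈ A := memA_of_adj hpart hadj hyu.symm hy
      have hu1 : a ≠ u := by rintro rfl; exact hya hyu
      have hu2 : a' ≠ u := by rintro rfl; exact hya' hyu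
      by_contra hxu
      exact htriple a ha a' ha' u huA hne' hu1 hu2 x hx hxa hxa' hxu y hya hya' hyu
  -- the common non-neighbor of a₁ and a₂
  obtain ⟨p, hpB, hpa₁, hpa₂⟩ := hApair a₁ ha₁ a₂ ha₂ hne
  set T := A \ G.neighborSet p with hTdef
  have hTcard : T.ncard = k := hMB p hpB
  have ha₁T : a₁ ∈ T := ⟨ha₁, fun h => hpa₁ h⟩
  have ha₂T : a₂ ∈ T := ⟨ha₂, fun h => hpa₂ h⟩
  have hpairT : ({a₁, a₂} : Set V) ⊆ T := by
    intro x hx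
    rcases hx with h | h
    · rw [show x = a₁ from h]; exact ha₁T
    · rw [show x = a₂ from h]; exact ha₂T
  have hk2 : 2 ≤ k := by
    have := Set.ncard_le_ncard hpairT (Set.toFinite _)
    rw [Set.ncard_pair hne, hTcard] at this
    exact this
  -- the projective-plane count
  have hcount : n - 1 = k * (k - 1) := by
    set Tf := T.toFinite.toFinset with hTf
    have hTfcard : Tf.card = k := by
      rw [hTf, ← Set.ncard_eq_toFinset_card]
      exact hTcard
    set f : V → Finset V := fun a => ((B \ G.neighborSet a).toFinite.toFinset).erase p with hf
    have hmemf : ∀ a y : V, y ∈ f a ↔ (y ≠ p ∧ y ∈ B ∧ ¬ G.Adj a y) := by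
      intro a y
      simp only [hf]
      simp only [Finset.mem_erase, Set.Finite.mem_toFinset, Set.mem_diff,
        SimpleGraph.mem_neighborSet]
    have hfcard : ∀ a ∈ Tf, (f a).card = k - 1 := by
      intro a haf
      have haT : a ∈ T := by rwa [hTf, Set.Finite.mem_toFinset] at haf
      have hpmem : p ∈ (B \ G.neighborSet a).toFinite.toFinset := by
        rw [Set.Finite.mem_toFinset]
        exact ⟨hpB, fun h => haT.2 h.symm⟩
      simp only [hf]
      rw [Finset.card_erase_of_mem hpmem, ← Set.ncard_eq_toFinset_card, hMA a haT.1]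
    have hunion : B.toFinite.toFinset.erase p = Tf.biUnion f := by
      ext y
      simp only [Finset.mem_erase, Finset.mem_biUnion, Set.Finite.mem_toFinset]
      constructor
      · rintro ⟨hyp, hyB⟩
        obtain ⟨q, hqA, hqp, hqy⟩ := hBpair p hpB y hyB (Ne.symm hyp)
        refine ⟨q, ?_, ?_⟩
        · rw [hTf, Set.Finite.mem_toFinset]
          exact ⟨hqA, fun h => hqp h.symm⟩
        · rw [hmemf]
          exact ⟨hyp, hyB, fun h => hqy h⟩
      · rintro ⟨a, haf, hyf⟩
        rw [hmemf] at hyf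
        exact ⟨hyf.1, hyf.2.1⟩
    have hdisj : ∀ a ∈ Tf, ∀ a' ∈ Tf, a ≠ a' → Disjoint (f a) (f a') := by
      intro a haf a' ha'f hne'
      rw [Finset.disjoint_left]
      intro y hy hy'
      rw [hmemf] at hy hy'
      have haT : a ∈ T := by rwa [hTf, Set.Finite.mem_toFinset] at haf
      have ha'T : a' ∈ T := by rwa [hTf, Set.Finite.mem_toFinset] at ha'f
      have heq : y = p := huniq a haT.1 a' ha'T.1 hne' y hy.2.1 p hpB
        (fun h => hy.2.2 h.symm) (fun h => hy'.2.2 h.symm) haT.2 ha'T.2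
      exact hy.1 heq
    have hcards := Finset.card_biUnion hdisj
    rw [← hunion] at hcards
    have hpBf : p ∈ B.toFinite.toFinset := by
      rw [Set.Finite.mem_toFinset]; exact hpB
    rw [Finset.card_erase_of_mem hpBf] at hcards
    have hBf : B.toFinite.toFinset.card = n := by
      rw [← Set.ncard_eq_toFinset_card]; exact hBn
    rw [hBf, Finset.sum_congr rfl hfcard, Finset.sum_const, hTfcard, smul_eq_mul] at hcards
    exact hcards
  -- identification of A'
  have hBunion : B₁ ∪ B₂ ∪ B' = G.neighborSet a₁ ∪ G.neighborSet a₂ := by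
    rw [hB₁, hB₂, hB']
    ext b
    simp only [Set.mem_union, Set.mem_diff, Set.mem_inter_iff]
    tauto
  have hA'eq : A' = T \ {a₁, a₂} := by
    rw [hA']
    ext a
    simp only [Set.mem_setOf_eq, Set.mem_diff, Set.mem_insert_iff, Set.mem_singleton_iff, hTdef]
    constructor
    · rintro ⟨⟨haA, hnot⟩, hsub⟩
      refine ⟨⟨haA, fun hmem => ?_⟩, hnot⟩
      have hadj2 : G.Adj p a := hmem
      have h2 : p ∈ G.neighborSet a := hadj2.symm
      have h4 := hsub h2
      rw [hBunion] at h4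
      rcases h4 with h | h
      · exact hpa₁ ((show G.Adj a₁ p from h).symm)
      · exact hpa₂ ((show G.Adj a₂ p from h).symm)
    · rintro ⟨⟨haA, hnp⟩, hnot⟩
      refine ⟨⟨haA, hnot⟩, ?_⟩
      intro b hbN
      rw [hBunion]
      by_contra hb2
      simp only [Set.mem_union, not_or] at hb2
      have hbB : b ∈ B := hNA a haA hbN
      have hbadj : G.Adj a b := hbN
      have heq : b = p := huniq a₁ ha₁ a₂ ha₂ hne b hbB p hpB
        (fun h => hb2.1 h.symm) (fun h => hb2.2 h.symm) hpa₁ hpa₂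
      rw [heq] at hbadj
      exact hnp hbadj.symm
  have hA'card : A'.ncard = k - 2 := by
    rw [hA'eq, Set.ncard_diff hpairT (Set.toFinite _), hTcard, Set.ncard_pair hne]
  have hA''eq : A'' = A \ T := by
    rw [hA'', hA'eq, Set.diff_union_of_subset hpairT]
  have hA''card : A''.ncard = n - k := by
    rw [hA''eq, Set.ncard_diff (show T ⊆ A from Set.diff_subset) (Set.toFinite _), hAn, hTcard]
  -- final numerology
  obtain ⟨j, rfl⟩ : ∃ j, k = j + 2 := ⟨k - 2, by omega⟩
  have e1 : (j + 2) * (j + 2 - 1) = j * j + 3 * j + 2 := by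
    have h : j + 2 - 1 = j + 1 := by omega
    rw [h]; ring
  have e2 : (j + 2) ^ 2 = j * j + 4 * j + 4 := by ring
  have e3 : (j + 2 - 1) ^ 2 = j * j + 2 * j + 1 := by
    have h : j + 2 - 1 = j + 1 := by omega
    rw [h]; ring
  have hc2 : n - 1 = j * j + 3 * j + 2 := by rw [hcount]; exact e1
  refine ⟨?_, by rw [hA'card], ?_⟩
  · rw [e2]
    set m := j * j with hm
    omega
  · rw [hA''card, e3]
    set m := j * j with hm
    omega
end
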